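/- arXiv:0804.0775 — 10 statements merged into one kernel-verified Lean document; each statement's English description precedes it below -/
import Mathlib

section
/- For any set of ordinals Y, the order type of the topological closure of Y (in the order topology on the ordinals) is at most otp(Y) + 1. -/
open Cardinal Set

/-- The order type of a set of ordinals. -/
noncomputable def otp (S : Set Ordinal.{0}) : Ordinal.{1} :=
  @Ordinal.type S (Subrel (· < ·) (· ∈ S)) (by infer_instance)

lemma otp_mono {S T : Set Ordinal.{0}} (h : S ⊆ T) : otp S ≤ otp T :=
  RelEmbedding.ordinal_type_le
    ⟨⟨Set.inclusion h, Set.inclusion_injective h⟩, Iff.rfl⟩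

lemma otp_inter_Iio_lt {T : Set Ordinal.{0}} {z : Ordinal.{0}} (hz : z ∈ T) :
    otp (T ∩ Iio z) < otp T := by
  have h1 : otp (T ∩ Iio z) ≤ Ordinal.typein (Subrel (· < ·) (· ∈ T)) ⟨z, hz⟩ := by
    rw [← Ordinal.type_subrel]
    refine RelEmbedding.ordinal_type_le ⟨⟨fun x => ⟨⟨x.1, x.2.1⟩, x.2.2⟩, ?_⟩, Iff.rfl⟩
    intro a b hab
    ext
    exact congrArg (fun y => (y.1 : Ordinal)) hab
  exact h1.trans_lt (Ordinal.typein_lt_type _ _)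

/-- For any set of ordinals `Y`, the order type of the topological closure of `Y`
(in the order topology on the ordinals) is at most `otp Y + 1`. -/
theorem otp_closure_le_otp_add_one (Y : Set Ordinal.{0}) :
    otp (closure Y) ≤ otp Y + 1 := by
  classical
  set F : Ordinal.{0} → Ordinal.{1} := fun x =>
    if x ∈ Y then otp (Y ∩ Iio x) + 1 else otp (Y ∩ Iio x) with hF
  -- between any x < y with y a new limit point, there is an element of Y
  have key : ∀ y ∈ closure Y, y ∉ Y → ∀ x < y, ∃ z ∈ Y, x < z ∧ z < y := by
    intro y hy hyY x hxy
    obtain ⟨hne, hsup⟩ := ((Ordinal.mem_closure_tfae y Y).out 0 2).mp hy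
    obtain ⟨z, hz, hxz⟩ := exists_lt_of_lt_csSup hne (hsup.symm ▸ hxy)
    refine ⟨z, hz.1, hxz, lt_of_le_of_ne hz.2 ?_⟩
    rintro rfl; exact hyY hz.1
  have inter_eq : ∀ {a b : Ordinal.{0}}, a ≤ b → (Y ∩ Iio b) ∩ Iio a = Y ∩ Iio a := by
    intro a b hab
    ext t
    constructor
    · rintro ⟨⟨ht, -⟩, ht2⟩; exact ⟨ht, ht2⟩
    · rintro ⟨ht, ht2⟩; exact ⟨⟨ht, lt_of_lt_of_le ht2 hab⟩, ht2⟩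
  have hmono : ∀ x ∈ closure Y, ∀ y ∈ closure Y, x < y → F x < F y := by
    intro x hx y hy hxy
    by_cases hxY : x ∈ Y
    · by_cases hyY : y ∈ Y
      · simp only [hF, if_pos hxY, if_pos hyY]
        have : otp (Y ∩ Iio x) < otp (Y ∩ Iio y) := by
          have := otp_inter_Iio_lt (T := Y ∩ Iio y) (z := x) ⟨hxY, hxy⟩
          rwa [inter_eq hxy.le] at this
        rw [Ordinal.add_one_eq_succ, Ordinal.add_one_eq_succ]
        exact Order.succ_lt_succ this
      · obtain ⟨z, hzY, hxz, hzy⟩ := key y hy hyY x hxy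
        simp only [hF, if_pos hxY, if_neg hyY]
        have h1 : otp (Y ∩ Iio x) < otp (Y ∩ Iio z) := by
          have := otp_inter_Iio_lt (T := Y ∩ Iio z) (z := x) ⟨hxY, hxz⟩
          rwa [inter_eq hxz.le] at this
        have h2 : otp (Y ∩ Iio z) < otp (Y ∩ Iio y) := by
          have := otp_inter_Iio_lt (T := Y ∩ Iio y) (z := z) ⟨hzY, hzy⟩
          rwa [inter_eq hzy.le] at this
        calc otp (Y ∩ Iio x) + 1 = Order.succ (otp (Y ∩ Iio x)) := by
                rw [Ordinal.add_one_eq_succ]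
          _ ≤ otp (Y ∩ Iio z) := Order.succ_le_of_lt h1
          _ < otp (Y ∩ Iio y) := h2
    · by_cases hyY : y ∈ Y
      · simp only [hF, if_neg hxY, if_pos hyY]
        have : otp (Y ∩ Iio x) ≤ otp (Y ∩ Iio y) :=
          otp_mono (inter_subset_inter_right Y (Iio_subset_Iio hxy.le))
        exact lt_of_le_of_lt this (lt_add_one _)
      · obtain ⟨z, hzY, hxz, hzy⟩ := key y hy hyY x hxy
        simp only [hF, if_neg hxY, if_neg hyY]
        have h1 : otp (Y ∩ Iio x) ≤ otp (Y ∩ Iio z) :=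
          otp_mono (inter_subset_inter_right Y (Iio_subset_Iio hxz.le))
        have h2 : otp (Y ∩ Iio z) < otp (Y ∩ Iio y) := by
          have := otp_inter_Iio_lt (T := Y ∩ Iio y) (z := z) ⟨hzY, hzy⟩
          rwa [inter_eq hzy.le] at this
        exact lt_of_le_of_lt h1 h2
  have hbound : ∀ x, F x < otp Y + 1 := by
    intro x
    by_cases hxY : x ∈ Y
    · simp only [hF, if_pos hxY]
      rw [Ordinal.add_one_eq_succ, Ordinal.add_one_eq_succ]
      exact Order.succ_lt_succ (otp_inter_Iio_lt hxY)
    · simp only [hF, if_neg hxY]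
      exact lt_of_le_of_lt (otp_mono inter_subset_left) (lt_add_one _)
  -- build the embedding
  set G : ↥(closure Y) → Ordinal.{1} := fun x => F x.1 with hG
  have hGmono : StrictMono G := fun a b h => hmono a.1 a.2 b.1 b.2 h
  haveI hwo : IsWellOrder (otp Y + 1).ToType (· < ·) := isWellOrder_lt
  have hemb : Subrel ((· < ·) : Ordinal.{0} → Ordinal.{0} → Prop) (· ∈ closure Y) ↪r
      ((· < ·) : (otp Y + 1).ToType → (otp Y + 1).ToType → Prop) := by
    refine ⟨⟨fun x => Ordinal.enum (· < ·)
      ⟨G x, by rw [Ordinal.type_toType]; exact hbound x.1⟩, ?_⟩, ?_⟩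
    · intro a b hab
      have h1 := Ordinal.enum_inj.mp hab
      have hGab : G a = G b := congrArg Subtype.val h1
      exact hGmono.injective hGab
    · intro a b
      show Ordinal.enum _ _ < Ordinal.enum _ _ ↔ _
      exact Ordinal.enum_lt_enum.trans (Subtype.mk_lt_mk.trans hGmono.lt_iff_lt)
  calc otp (closure Y) ≤ Ordinal.type ((· < ·) : (otp Y + 1).ToType → _ → Prop) :=
        hemb.ordinal_type_le
    _ = otp Y + 1 := Ordinal.type_toType _
end

section
/- Assume (κ⁺, κ) ↠ (θ⁺, θ) (Chang conjecture) for a singular cardinal κ and a regular θ. Then θ⁺ ≤ θ^cof(κ). -/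
open Cardinal Set

/-- The Chang conjecture `(k2, k1) ↠ (t2, t1)`, in its algebraic form: for every countable
family of finitary functions on `k2` there is a set `X ⊆ k2` closed under all of them with
`|X| = t2` and `|X ∩ k1| = t1`. -/
def ChangConj (k2 k1 t2 t1 : Cardinal.{0}) : Prop :=
  ∀ F : ℕ → (List Ordinal.{0} → Ordinal.{0}),
    (∀ n l, (∀ x ∈ l, x < k2.ord) → F n l < k2.ord) →
    ∃ X : Set Ordinal.{0}, X ⊆ Set.Iio k2.ord ∧
      (∀ n l, (∀ x ∈ l, x ∈ X) → F n l ∈ X) ∧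
      #X = Cardinal.lift.{1} t2 ∧
      #(X ∩ Set.Iio k1.ord : Set Ordinal.{0}) = Cardinal.lift.{1} t1

/-- If the Chang conjecture `(κ⁺, κ) ↠ (θ⁺, θ)` holds for a singular cardinal `κ` and a
regular cardinal `θ`, then `θ⁺ ≤ θ ^ cof κ`. -/
theorem succ_le_pow_cof_of_changConj (κ θ : Cardinal.{0})
    (hκinf : Cardinal.aleph0 ≤ κ) (hκsing : ¬κ.IsRegular) (hθ : θ.IsRegular)
    (hcc : ChangConj (Order.succ κ) κ (Order.succ θ) θ) :
    Order.succ θ ≤ θ ^ (κ.ord.cof) := by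
  classical
  have hκpos : (0 : Cardinal) < κ := aleph0_pos.trans_le hκinf
  have hsucc_pos : (0 : Cardinal) < Order.succ κ := hκpos.trans_le (Order.le_succ κ)
  have hord_pos : (0 : Ordinal) < (Order.succ κ).ord := by
    rw [← Cardinal.ord_zero]; exact Cardinal.ord_lt_ord.2 hsucc_pos
  have hκord_pos : (0 : Ordinal) < κ.ord := by
    rw [← Cardinal.ord_zero]; exact Cardinal.ord_lt_ord.2 hκpos
  have hκlt : κ.ord < (Order.succ κ).ord := Cardinal.ord_lt_ord.2 (Order.lt_succ κ)
  have hcof_le : (κ.ord.cof).ord ≤ κ.ord := Cardinal.ord_le_ord.2 (Ordinal.cof_ord_le κ)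
  -- Choose κ⁺ pairwise distinct functions `cof κ → κ`, via König's theorem.
  have hJle : #(Set.Iio (Order.succ κ).ord) ≤
      #(Set.Iio (κ.ord.cof).ord → Set.Iio κ.ord) := by
    rw [Ordinal.mk_Iio_ordinal, ← Cardinal.power_def, Ordinal.mk_Iio_ordinal,
      Ordinal.mk_Iio_ordinal, Cardinal.card_ord, Cardinal.card_ord, Cardinal.card_ord,
      ← Cardinal.lift_power]
    exact Cardinal.lift_le.2 (Order.succ_le_of_lt (Cardinal.lt_power_cof hκinf))
  obtain ⟨J⟩ := (Cardinal.le_def _ _).1 hJle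
  -- The two functions of the algebra.
  set U : Ordinal → Ordinal → Ordinal := fun β i =>
    if h : β < (Order.succ κ).ord ∧ i < (κ.ord.cof).ord then
      (J ⟨β, h.1⟩ ⟨i, h.2⟩ : Ordinal) else 0 with hU
  have hUlt : ∀ β i, U β i < κ.ord := by
    intro β i
    rw [hU]; dsimp only; split
    · exact (J _ _).2
    · exact hκord_pos
  have hUJ : ∀ (β i : Ordinal) (hβ : β < (Order.succ κ).ord) (hi : i < (κ.ord.cof).ord),
      U β i = (J ⟨β, hβ⟩ ⟨i, hi⟩ : Ordinal) := by
    intro β i hβ hi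
    rw [hU]; dsimp only; rw [dif_pos ⟨hβ, hi⟩]
  have hHex : ∀ β β' : Ordinal, β < (Order.succ κ).ord → β' < (Order.succ κ).ord →
      β ≠ β' → ∃ i, i < (κ.ord.cof).ord ∧ U β i ≠ U β' i := by
    intro β β' hβ hβ' hne
    by_contra hcon
    push_neg at hcon
    apply hne
    have hJeq : J ⟨β, hβ⟩ = J ⟨β', hβ'⟩ := by
      funext i
      apply Subtype.ext
      have := hcon i.1 i.2
      rwa [hUJ β i.1 hβ i.2, hUJ β' i.1 hβ' i.2] at this
    have := J.injective hJeq
    exact congrArg Subtype.val this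
  set H : Ordinal → Ordinal → Ordinal := fun β β' =>
    if h : ∃ i, i < (κ.ord.cof).ord ∧ U β i ≠ U β' i then h.choose else 0 with hHdef
  have hHlt : ∀ β β', H β β' < (Order.succ κ).ord := by
    intro β β'
    rw [hHdef]; dsimp only; split
    · next h => exact ((h.choose_spec.1).trans_le hcof_le).trans hκlt
    · exact hord_pos
  -- package into a countable family
  set F : ℕ → List Ordinal → Ordinal := fun n l =>
    if n = 0 then U l.headI l.tail.headI
    else if n = 1 then H l.headI l.tail.headI
    else 0 with hFdef
  have hF : ∀ n l, (∀ x ∈ l, x < (Order.succ κ).ord) → F n l < (Order.succ κ).ord := by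
    intro n l _
    rw [hFdef]; dsimp only
    split
    · exact (hUlt _ _).trans hκlt
    · split
      · exact hHlt _ _
      · exact hord_pos
  obtain ⟨X, hXsub, hXcl, hX2, hX1⟩ := hcc F hF
  -- closure of X under U and H
  have hUX : ∀ β ∈ X, ∀ i ∈ X, U β i ∈ X := by
    intro β hβ i hi
    have h := hXcl 0 [β, i] (by
      intro x hx
      simp only [List.mem_cons, List.not_mem_nil, or_false] at hx
      rcases hx with rfl | rfl <;> assumption)
    simpa [hFdef] using h
  have hHX : ∀ β ∈ X, ∀ β' ∈ X, H β β' ∈ X := by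
    intro β hβ β' hβ'
    have h := hXcl 1 [β, β'] (by
      intro x hx
      simp only [List.mem_cons, List.not_mem_nil, or_false] at hx
      rcases hx with rfl | rfl <;> assumption)
    simpa [hFdef] using h
  -- the injection
  set A : Set Ordinal := X ∩ Set.Iio κ.ord with hAdef
  set L : Set Ordinal := X ∩ Set.Iio (κ.ord.cof).ord with hLdef
  set Ψ : X → (L → A) := fun β i =>
    ⟨U β.1 i.1, hUX β.1 β.2 i.1 i.2.1, hUlt β.1 i.1⟩ with hΨdef
  have hΨinj : Function.Injective Ψ := by
    intro β β' heq
    by_contra hne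
    have hβ : β.1 < (Order.succ κ).ord := hXsub β.2
    have hβ' : β'.1 < (Order.succ κ).ord := hXsub β'.2
    have hne1 : β.1 ≠ β'.1 := fun h => hne (Subtype.ext h)
    have hex := hHex β.1 β'.1 hβ hβ' hne1
    have hmem : H β.1 β'.1 ∈ X := hHX β.1 β.2 β'.1 β'.2
    have hdef : H β.1 β'.1 = hex.choose := by
      rw [hHdef]; dsimp only; rw [dif_pos hex]
    have hspec := hex.choose_spec
    have hiL : H β.1 β'.1 ∈ L := ⟨hmem, by rw [hdef]; exact hspec.1⟩
    have hval := congrFun heq ⟨H β.1 β'.1, hiL⟩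
    have hval' : U β.1 (H β.1 β'.1) = U β'.1 (H β.1 β'.1) := congrArg Subtype.val hval
    rw [hdef] at hval'
    exact hspec.2 hval'
  -- cardinal arithmetic
  have h1 : Cardinal.lift.{1} (Order.succ θ) ≤ #(L → A) := by
    rw [← hX2]; exact Cardinal.mk_le_of_injective hΨinj
  have h2 : #(L → A) = (#A) ^ (#L) := (Cardinal.power_def _ _).symm
  have hAcard : #A = Cardinal.lift.{1} θ := hX1
  have hLcard : #L ≤ Cardinal.lift.{1} (κ.ord.cof) := by
    calc #L ≤ #(Set.Iio (κ.ord.cof).ord) :=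
          Cardinal.mk_le_mk_of_subset inter_subset_right
      _ = Cardinal.lift.{1} (κ.ord.cof) := by
          rw [Ordinal.mk_Iio_ordinal, Cardinal.card_ord]
  have hθ0 : (Cardinal.lift.{1} θ) ≠ 0 := by
    simp only [ne_eq, Cardinal.lift_eq_zero]
    exact (aleph0_pos.trans_le hθ.aleph0_le).ne'
  have h3 : (#A) ^ (#L) ≤ Cardinal.lift.{1} (θ ^ κ.ord.cof) := by
    rw [hAcard, Cardinal.lift_power]
    exact Cardinal.power_le_power_left hθ0 hLcard
  have hfin : Cardinal.lift.{1} (Order.succ θ) ≤ Cardinal.lift.{1} (θ ^ κ.ord.cof) := by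
    rw [← h2] at h3
    exact h1.trans h3
  exact Cardinal.lift_le.1 hfin
end

section
/- Let D be a closed θ-covering matrix on λ. If CP(D) holds (there is an unbounded A ⊆ λ such that every Z ∈ [A]^θ is contained in some D(i,β)), then S(D) holds, witnessed by the set S^λ_θ of ordinals below λ of cofinality θ. -/
open Cardinal Set

/-- `C` is a club (closed and unbounded) subset of the ordinal `lam`. -/
def IsClubIn (C : Set Ordinal.{0}) (lam : Ordinal.{0}) : Prop :=
  (∀ γ ∈ C, γ < lam) ∧ (∀ α < lam, ∃ β ∈ C, α < β) ∧
    (∀ δ, δ < lam → δ ≠ 0 → (∀ α < δ, ∃ β ∈ C, α < β ∧ β < δ) → δ ∈ C)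

/-- `S` is a stationary subset of the ordinal `lam`. -/
def IsStationaryIn (S : Set Ordinal.{0}) (lam : Ordinal.{0}) : Prop :=
  (∀ γ ∈ S, γ < lam) ∧ ∀ C, IsClubIn C lam → (S ∩ C).Nonempty
/-- `D` is a `θ`-covering matrix on `lam` (`θ`, `lam` ordinals, typically `θ = θc.ord`
for a regular cardinal `θc`): entries `D i β` for `i < θ`, `β < lam` union up to `β`,
are monotone in `i`, and are directed under end-coverage. -/
def IsCovMatrix (θ lam : Ordinal.{0}) (D : Ordinal.{0} → Ordinal.{0} → Set Ordinal.{0}) : Prop :=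
  (∀ β < lam, (⋃ i ∈ Set.Iio θ, D i β) = Set.Iio β) ∧
  (∀ i j, i ≤ j → j < θ → ∀ β < lam, D i β ⊆ D j β) ∧
  (∀ β γ, β < γ → γ < lam → ∀ i < θ, ∃ j < θ, D i β ⊆ D j γ)

/-- `D` is uniform: each `D i β` contains a club in `β` for eventually all `i < θ`. -/
def IsUniformMatrix (θ lam : Ordinal.{0}) (D : Ordinal.{0} → Ordinal.{0} → Set Ordinal.{0}) : Prop :=
  ∀ β < lam, ∃ i₀ < θ, ∀ i, i₀ ≤ i → i < θ → ∃ C, IsClubIn C β ∧ C ⊆ D i β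

/-- `D` is transitive: `α ∈ D i β` implies `D i α ⊆ D i β`. -/
def IsTransMatrix (θ lam : Ordinal.{0}) (D : Ordinal.{0} → Ordinal.{0} → Set Ordinal.{0}) : Prop :=
  ∀ i < θ, ∀ β < lam, ∀ α ∈ D i β, D i α ⊆ D i β

/-- `D` is closed: each entry is closed under suprema of its subsets of size `≤ θ`. -/
def IsClosedMatrix (θ : Cardinal.{0}) (lam : Ordinal.{0})
    (D : Ordinal.{0} → Ordinal.{0} → Set Ordinal.{0}) : Prop :=
  ∀ i < θ.ord, ∀ β < lam, ∀ X ⊆ D i β, X.Nonempty → #X ≤ Cardinal.lift.{1} θ →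
    sSup X ∈ D i β

/-- `S(D)`: there is a stationary `S ⊆ lam` such that every `θ`-indexed family of
stationary subsets of `S` meets a single entry of the matrix `D`. -/
def MatrixS (θ : Cardinal.{0}) (lam : Ordinal.{0})
    (D : Ordinal.{0} → Ordinal.{0} → Set Ordinal.{0}) : Prop :=
  ∃ S, IsStationaryIn S lam ∧ ∀ Ss : Ordinal.{0} → Set Ordinal.{0},
    (∀ i < θ.ord, Ss i ⊆ S ∧ IsStationaryIn (Ss i) lam) →
    ∃ j < θ.ord, ∃ β < lam, ∀ i < θ.ord, (Ss i ∩ D j β).Nonempty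

/-- `CP(D)`: there is an unbounded `A ⊆ lam` such that every subset of `A` of size `θ`
is contained in a single entry of `D`. -/
def MatrixCP (θ : Cardinal.{0}) (lam : Ordinal.{0})
    (D : Ordinal.{0} → Ordinal.{0} → Set Ordinal.{0}) : Prop :=
  ∃ A : Set Ordinal.{0}, A ⊆ Set.Iio lam ∧ (∀ α < lam, ∃ β ∈ A, α < β) ∧
    ∀ Z ⊆ A, #Z = Cardinal.lift.{1} θ → ∃ i < θ.ord, ∃ β < lam, Z ⊆ D i β

set_option linter.deprecated false

/-- If `δ` is the limit of a strictly increasing `θ.ord`-indexed sequence (`θ` regular),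
then `cof δ = θ`. -/
theorem my_cof_eq_of_seq (θ : Cardinal.{0}) (hθ : θ.IsRegular) (δ : Ordinal.{0})
    (f : Ordinal.{0} → Ordinal.{0})
    (hmono : ∀ η ξ, η < ξ → ξ < θ.ord → f η < f ξ)
    (hlt : ∀ ξ < θ.ord, f ξ < δ)
    (hcof : ∀ α < δ, ∃ ξ < θ.ord, α < f ξ) : δ.cof = θ := by
  have hlim : Order.IsSuccLimit θ.ord := Cardinal.isSuccLimit_ord hθ.aleph0_le
  apply le_antisymm
  · -- δ is the bsup of the sequence
    have hδ : δ = Ordinal.bsup θ.ord (fun ξ _ => f ξ) := by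
      apply le_antisymm
      · apply le_of_forall_lt
        intro α hα
        obtain ⟨ξ, hξ, h⟩ := hcof α hα
        exact h.trans_le (Ordinal.le_bsup _ ξ hξ)
      · exact Ordinal.bsup_le fun ξ h => (hlt ξ h).le
    rw [hδ]
    refine (Ordinal.cof_bsup_le ?_).trans_eq (Cardinal.card_ord θ)
    intro ξ hξ
    exact (hmono ξ _ (Order.lt_succ ξ) (hlim.succ_lt hξ)).trans_le
      (Ordinal.le_bsup _ _ (hlim.succ_lt hξ))
  · obtain ⟨ι, g, hg, hι⟩ := Ordinal.exists_lsub_cof δ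
    rw [← hι, ← hθ.cof_eq]
    have hgδ : ∀ x, g x < δ := fun x => hg ▸ Ordinal.lt_lsub g x
    have hch : ∀ x : ι, ∃ ξ < θ.ord, g x < f ξ := fun x => hcof (g x) (hgδ x)
    choose h hhθ hgh using hch
    have hlsub : Ordinal.lsub h = θ.ord := by
      apply le_antisymm (Ordinal.lsub_le hhθ)
      apply le_of_forall_lt
      intro ξ hξ
      have : f ξ < Ordinal.lsub g := hg.symm ▸ hlt ξ hξ
      obtain ⟨x, hx⟩ := Ordinal.lt_lsub_iff.1 this
      have hξx : ξ < h x := by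
        by_contra hcon
        push_neg at hcon
        have hle : f (h x) ≤ f ξ := by
          rcases lt_or_eq_of_le hcon with hc | hc
          · exact (hmono _ _ hc hξ).le
          · rw [hc]
        exact absurd (hx.trans_lt (hgh x)) hle.not_gt
      exact hξx.trans (Ordinal.lt_lsub h x)
    rw [← hlsub]
    exact Ordinal.cof_lsub_le h

/-- Given an unbounded `U ⊆ lam.ord` (`lam` regular, `θ < lam` regular), and `α₀ < lam.ord`,
there is a strictly increasing `θ.ord`-sequence through `U` above `α₀` whose limit `δ` is
below `lam.ord` and has cofinality `θ`. -/
theorem my_exists_seq (θ lam : Cardinal.{0}) (hθ : θ.IsRegular) (hlam : lam.IsRegular)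
    (hθlam : θ < lam) (U : Set Ordinal.{0}) (hUb : U ⊆ Set.Iio lam.ord)
    (hU : ∀ α < lam.ord, ∃ β ∈ U, α < β) (α₀ : Ordinal.{0}) (hα₀ : α₀ < lam.ord) :
    ∃ f : Ordinal.{0} → Ordinal.{0}, ∃ δ : Ordinal.{0},
      (∀ ξ < θ.ord, f ξ ∈ U) ∧ (∀ η ξ, η < ξ → ξ < θ.ord → f η < f ξ) ∧
      α₀ < δ ∧ δ < lam.ord ∧ δ.cof = θ ∧ (∀ ξ < θ.ord, f ξ < δ) ∧
      (∀ α < δ, ∃ ξ < θ.ord, α < f ξ) := by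
  classical
  have hθlim : Order.IsSuccLimit θ.ord := Cardinal.isSuccLimit_ord hθ.aleph0_le
  set next : Ordinal.{0} → Ordinal.{0} :=
    fun α => if h : α < lam.ord then (hU α h).choose else 0 with hnextdef
  have hnext : ∀ α, α < lam.ord → next α ∈ U ∧ α < next α := by
    intro α h
    simp only [hnextdef, dif_pos h]
    exact ⟨(hU α h).choose_spec.1, (hU α h).choose_spec.2⟩
  set f : Ordinal.{0} → Ordinal.{0} :=
    Ordinal.lt_wf.fix (fun ξ IH => next (α₀ ⊔ Ordinal.bsup ξ IH)) with hfdef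
  have hfeq : ∀ ξ, f ξ = next (α₀ ⊔ Ordinal.bsup ξ (fun η _ => f η)) := fun ξ =>
    Ordinal.lt_wf.fix_eq _ ξ
  have key : ∀ ξ, ξ < θ.ord →
      (α₀ ⊔ Ordinal.bsup ξ (fun η _ => f η)) < lam.ord ∧ f ξ ∈ U := by
    intro ξ
    induction ξ using Ordinal.induction with
    | _ ξ IH =>
      intro hξ
      have hb : (α₀ ⊔ Ordinal.bsup ξ (fun η _ => f η)) < lam.ord := by
        apply max_lt hα₀
        apply Ordinal.bsup_lt_ord
        · rw [hlam.cof_eq]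
          exact lt_of_le_of_lt ((Ordinal.card_le_card hξ.le).trans_eq (Cardinal.card_ord θ)) hθlam
        · intro η hη
          exact hUb (IH η hη (hη.trans hξ)).2
      exact ⟨hb, by rw [hfeq ξ]; exact (hnext _ hb).1⟩
  have hfU : ∀ ξ < θ.ord, f ξ ∈ U := fun ξ h => (key ξ h).2
  have hflam : ∀ ξ < θ.ord, f ξ < lam.ord := fun ξ h => hUb (hfU ξ h)
  have hgt : ∀ ξ < θ.ord, (α₀ ⊔ Ordinal.bsup ξ (fun η _ => f η)) < f ξ := by
    intro ξ h
    rw [hfeq ξ]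
    exact (hnext _ (key ξ h).1).2
  have hmono : ∀ η ξ, η < ξ → ξ < θ.ord → f η < f ξ := fun η ξ hηξ hξ =>
    lt_of_le_of_lt ((Ordinal.le_bsup (fun η _ => f η) η hηξ).trans le_sup_right) (hgt ξ hξ)
  set δ : Ordinal.{0} := Ordinal.bsup θ.ord (fun ξ _ => f ξ) with hδdef
  have hfδ : ∀ ξ < θ.ord, f ξ < δ := fun ξ h =>
    (hmono ξ _ (Order.lt_succ ξ) (hθlim.succ_lt h)).trans_le
      (Ordinal.le_bsup _ _ (hθlim.succ_lt h))
  have hcofin : ∀ α < δ, ∃ ξ < θ.ord, α < f ξ := by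
    intro α hα
    obtain ⟨ξ, hξ, h⟩ := (Ordinal.lt_bsup _).1 hα
    exact ⟨ξ, hξ, h⟩
  have hδlam : δ < lam.ord := by
    apply Ordinal.bsup_lt_ord _ hflam
    rw [hlam.cof_eq, Cardinal.card_ord]
    exact hθlam
  have hα₀δ : α₀ < δ := lt_of_le_of_lt (le_sup_left.trans (hgt 0 hθlim.pos).le) (hfδ 0 hθlim.pos)
  exact ⟨f, δ, hfU, hmono, hα₀δ, hδlam, my_cof_eq_of_seq θ hθ δ f hmono hfδ hcofin, hfδ, hcofin⟩

/-- If `D` is a closed `θ`-covering matrix on `lam` and `CP(D)` holds, then `S(D)` holds,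
witnessed by the set of points of `lam` of cofinality `θ`. -/
theorem matrixS_of_matrixCP_of_closed (θ lam : Cardinal.{0})
    (hθ : θ.IsRegular) (hlam : lam.IsRegular) (hθlam : θ < lam)
    (D : Ordinal.{0} → Ordinal.{0} → Set Ordinal.{0})
    (hmat : IsCovMatrix θ.ord lam.ord D)
    (hclosed : IsClosedMatrix θ lam.ord D)
    (hcp : MatrixCP θ lam.ord D) :
    IsStationaryIn {δ | δ < lam.ord ∧ Ordinal.cof δ = θ} lam.ord ∧
      ∀ Ss : Ordinal.{0} → Set Ordinal.{0},
        (∀ i < θ.ord, Ss i ⊆ {δ | δ < lam.ord ∧ Ordinal.cof δ = θ} ∧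
          IsStationaryIn (Ss i) lam.ord) →
        ∃ j < θ.ord, ∃ β < lam.ord, ∀ i < θ.ord, (Ss i ∩ D j β).Nonempty := by
  classical
  have hθlim : Order.IsSuccLimit θ.ord := Cardinal.isSuccLimit_ord hθ.aleph0_le
  have hlamlim : Order.IsSuccLimit lam.ord := Cardinal.isSuccLimit_ord hlam.aleph0_le
  -- Part 1: the set of points of cofinality θ is stationary
  have hstat : IsStationaryIn {δ | δ < lam.ord ∧ Ordinal.cof δ = θ} lam.ord := by
    refine ⟨fun γ h => h.1, fun C hC => ?_⟩
    obtain ⟨f, δ, hfU, hmono, h0δ, hδlam, hδcof, hfδ, hcofin⟩ :=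
      my_exists_seq θ lam hθ hlam hθlam C (fun γ hγ => hC.1 γ hγ) hC.2.1 0 hlamlim.pos
    have hδC : δ ∈ C := by
      refine hC.2.2 δ hδlam h0δ.ne' ?_
      intro α hα
      obtain ⟨ξ, hξ, h⟩ := hcofin α hα
      exact ⟨f ξ, hfU ξ hξ, h, hfδ ξ hξ⟩
    exact ⟨δ, ⟨hδlam, hδcof⟩, hδC⟩
  refine ⟨hstat, ?_⟩
  intro Ss hSs
  obtain ⟨A, hA1, hA2, hA3⟩ := hcp
  -- The club of limit points of A
  set C₀ : Set Ordinal.{0} :=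
    {δ | δ < lam.ord ∧ 0 < δ ∧ ∀ α < δ, ∃ β ∈ A, α < β ∧ β < δ} with hC₀def
  have hC₀ : IsClubIn C₀ lam.ord := by
    refine ⟨fun γ h => h.1, fun α hα => ?_, fun δ hδ hδ0 hcl => ?_⟩
    · obtain ⟨f, δ, hfU, hmono, hαδ, hδlam, hδcof, hfδ, hcofin⟩ :=
        my_exists_seq θ lam hθ hlam hθlam A hA1 hA2 α hα
      refine ⟨δ, ⟨hδlam, (zero_le : (0 : Ordinal.{0}) ≤ α).trans_lt hαδ, ?_⟩, hαδ⟩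
      intro α' hα'
      obtain ⟨ξ, hξ, h⟩ := hcofin α' hα'
      exact ⟨f ξ, hfU ξ hξ, h, hfδ ξ hξ⟩
    · refine ⟨hδ, pos_iff_ne_zero.2 hδ0, fun α hα => ?_⟩
      obtain ⟨β, hβC, hαβ, hβδ⟩ := hcl α hα
      obtain ⟨a, haA, hαa, haβ⟩ := hβC.2.2 α hαβ
      exact ⟨a, haA, hαa, haβ.trans hβδ⟩
  -- pick a point of each Sᵢ in C₀
  have hpick : ∀ i, i < θ.ord → ((Ss i) ∩ C₀).Nonempty := fun i hi =>
    (hSs i hi).2.2 C₀ hC₀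
  set d : Ordinal.{0} → Ordinal.{0} :=
    fun i => if h : i < θ.ord then (hpick i h).choose else 0 with hddef
  have hd : ∀ i, (h : i < θ.ord) → d i ∈ Ss i ∩ C₀ := by
    intro i h
    simp only [hddef, dif_pos h]
    exact (hpick i h).choose_spec
  -- choose cofinal subsets of A below each d i
  have hX : ∀ i : Ordinal.{0}, ∃ X : Set Ordinal.{0}, X ⊆ A ∧ #X ≤ Cardinal.lift.{1} θ ∧
      (i < θ.ord → (X.Nonempty ∧ sSup X = d i)) := by
    intro i
    by_cases hi : i < θ.ord
    · have hdi := hd i hi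
      have hdC : d i ∈ C₀ := hdi.2
      have hcofd : (d i).cof = θ := ((hSs i hi).1 hdi.1).2
      obtain ⟨ι, g, hg, hι⟩ := Ordinal.exists_lsub_cof (d i)
      have hne : Nonempty ι := by
        rw [← Cardinal.mk_ne_zero_iff]
        rw [hι, hcofd]
        exact hθ.pos.ne'
      have hgd : ∀ x, g x < d i := fun x => hg ▸ Ordinal.lt_lsub g x
      have hch : ∀ x : ι, ∃ a ∈ A, g x < a ∧ a < d i := fun x => hdC.2.2 (g x) (hgd x)
      choose a haA hga had using hch
      have hbdd : BddAbove (Set.range a) := ⟨d i, by rintro x ⟨y, rfl⟩; exact (had y).le⟩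
      refine ⟨Set.range a, Set.range_subset_iff.2 haA, ?_, fun _ => ⟨Set.range_nonempty a, ?_⟩⟩
      · have h1 : Cardinal.lift.{0} #(Set.range a) ≤ Cardinal.lift.{1} #ι :=
          Cardinal.mk_range_le_lift
        rw [hι, hcofd] at h1
        simpa using h1
      · apply le_antisymm
        · apply csSup_le (Set.range_nonempty a)
          rintro x ⟨y, rfl⟩
          exact (had y).le
        · apply le_of_forall_lt
          intro α hα
          have : α < Ordinal.lsub g := hg.symm ▸ hα
          obtain ⟨x, hx⟩ := Ordinal.lt_lsub_iff.1 this
          exact (hx.trans_lt (hga x)).trans_le (le_csSup hbdd (Set.mem_range_self x))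
    · exact ⟨∅, empty_subset A, by simp, fun h => absurd h hi⟩
  choose X hXA hXcard hXrest using hX
  -- the padding set Y of size θ
  obtain ⟨g, δY, hgU, hgmono, -, -, -, -, -⟩ :=
    my_exists_seq θ lam hθ hlam hθlam A hA1 hA2 0 hlamlim.pos
  set Y : Set Ordinal.{0} := g '' (Set.Iio θ.ord) with hYdef
  have hYA : Y ⊆ A := by
    rintro y ⟨ξ, hξ, rfl⟩
    exact hgU ξ hξ
  have hYcard : #Y = Cardinal.lift.{1} θ := by
    rw [Cardinal.mk_image_eq_of_injOn]
    · rw [Ordinal.mk_Iio_ordinal, Cardinal.card_ord]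
    · intro x hx y hy hxy
      by_contra hne
      rcases lt_or_gt_of_ne hne with h | h
      · exact absurd hxy (hgmono x y h hy).ne
      · exact absurd hxy.symm (hgmono y x h hx).ne
  -- Z and CP
  set Z : Set Ordinal.{0} := Y ∪ ⋃ i ∈ Set.Iio θ.ord, X i with hZdef
  have hZA : Z ⊆ A := by
    apply union_subset hYA
    apply iUnion₂_subset
    intro i _
    exact hXA i
  have hZcard : #Z = Cardinal.lift.{1} θ := by
    have hal : ℵ₀ ≤ Cardinal.lift.{1} θ := Cardinal.aleph0_le_lift.2 hθ.aleph0_le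
    apply le_antisymm
    · refine (Cardinal.mk_union_le _ _).trans ?_
      have h1 : #(⋃ i ∈ Set.Iio θ.ord, X i) ≤ Cardinal.lift.{1} θ := by
        refine (Cardinal.mk_biUnion_le _ _).trans ?_
        have h2 : #(Set.Iio θ.ord) = Cardinal.lift.{1} θ := by
          rw [Ordinal.mk_Iio_ordinal, Cardinal.card_ord]
        have h3 : (⨆ x : Set.Iio θ.ord, #(X x.1)) ≤ Cardinal.lift.{1} θ :=
          ciSup_le' fun x => hXcard x.1
        calc #(Set.Iio θ.ord) * (⨆ x : Set.Iio θ.ord, #(X x.1))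
            ≤ Cardinal.lift.{1} θ * Cardinal.lift.{1} θ :=
              mul_le_mul' h2.le h3
          _ = Cardinal.lift.{1} θ := Cardinal.mul_eq_self hal
      rw [hYcard]
      calc Cardinal.lift.{1} θ + #(⋃ i ∈ Set.Iio θ.ord, X i)
          ≤ Cardinal.lift.{1} θ + Cardinal.lift.{1} θ := by
            exact add_le_add le_rfl h1
        _ = Cardinal.lift.{1} θ := Cardinal.add_eq_self hal
    · rw [← hYcard]
      exact Cardinal.mk_le_mk_of_subset subset_union_left
  obtain ⟨j, hj, β, hβ, hZD⟩ := hA3 Z hZA hZcard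
  refine ⟨j, hj, β, hβ, fun i hi => ?_⟩
  have hXZ : X i ⊆ Z := by
    refine subset_trans ?_ subset_union_right
    exact subset_biUnion_of_mem hi
  have hsup : sSup (X i) ∈ D j β :=
    hclosed j hj β hβ (X i) (hXZ.trans hZD) (hXrest i hi).1 (hXcard i)
  rw [(hXrest i hi).2] at hsup
  exact ⟨d i, (hd i hi).1, hsup⟩
end

section
/- Let D be a transitive θ-covering matrix on λ. If S(D) holds, then CP(D) holds: there is an unbounded (indeed stationary) subset T of λ such that every Z ∈ [T]^θ is contained in some entry D(j,δ) of the matrix. -/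
open Cardinal Set

section Aux

variable {θ lam : Cardinal.{0}}

lemma aux_ord_pos (hθ : θ.IsRegular) : 0 < θ.ord :=
  lt_of_lt_of_le Ordinal.omega0_pos (by rw [← Cardinal.ord_aleph0]; exact Cardinal.ord_le_ord.mpr hθ.aleph0_le)

lemma aux_one_lt_ord (hθ : θ.IsRegular) : 1 < θ.ord :=
  lt_of_lt_of_le Ordinal.one_lt_omega0 (by rw [← Cardinal.ord_aleph0]; exact Cardinal.ord_le_ord.mpr hθ.aleph0_le)

lemma isClubIn_biInter (hθ : θ.IsRegular) (hlam : lam.IsRegular) (hθlam : θ < lam)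
    (f : Ordinal.{0} → Set Ordinal.{0}) (hf : ∀ j < θ.ord, IsClubIn (f j) lam.ord) :
    IsClubIn (⋂ j ∈ Set.Iio θ.ord, f j) lam.ord := by
  have hθ0 : 0 < θ.ord := aux_ord_pos hθ
  have hlim : Order.IsSuccLimit lam.ord := Cardinal.isSuccLimit_ord hlam.aleph0_le
  have hcof : lam.ord.cof = lam := hlam.cof_eq
  refine ⟨?_, ?_, ?_⟩
  · intro γ hγ
    exact (hf 0 hθ0).1 γ (Set.mem_iInter₂.mp hγ 0 hθ0)
  · -- unboundedness
    intro α hα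
    -- a single step function
    have step : ∀ γ < lam.ord, ∃ b, b < lam.ord ∧ γ < b ∧
        ∀ j < θ.ord, ∃ β ∈ f j, γ < β ∧ β ≤ b := by
      intro γ hγ
      have hch : ∀ j (hj : j < θ.ord), ∃ β ∈ f j, γ < β := fun j hj => (hf j hj).2.1 γ hγ
      set g : ∀ j < θ.ord, Ordinal.{0} := fun j hj => (hch j hj).choose with hg
      have hgspec : ∀ j (hj : j < θ.ord), g j hj ∈ f j ∧ γ < g j hj := by
        intro j hj
        obtain ⟨h1, h2⟩ := (hch j hj).choose_spec
        exact ⟨h1, h2⟩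
      have hb0 : Ordinal.bsup θ.ord g < lam.ord := by
        apply Ordinal.bsup_lt_ord
        · rw [Cardinal.card_ord, hcof]; exact hθlam
        · intro j hj; exact (hf j hj).1 _ (hgspec j hj).1
      refine ⟨max (Ordinal.bsup θ.ord g) (Order.succ γ), ?_, ?_, ?_⟩
      · exact max_lt hb0 (hlim.succ_lt hγ)
      · exact lt_of_lt_of_le (Order.lt_succ γ) (le_max_right _ _)
      · intro j hj
        exact ⟨g j hj, (hgspec j hj).1, (hgspec j hj).2,
          le_trans (Ordinal.le_bsup g j hj) (le_max_left _ _)⟩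
    obtain ⟨N, hN⟩ : ∃ N : Ordinal.{0} → Ordinal.{0}, ∀ γ, γ < lam.ord →
        (N γ < lam.ord ∧ γ < N γ ∧ ∀ j < θ.ord, ∃ β ∈ f j, γ < β ∧ β ≤ N γ) :=
      ⟨fun γ => if h : γ < lam.ord then (step γ h).choose else 0,
        fun γ h => by simp only [dif_pos h]; exact (step γ h).choose_spec⟩
    have hseq : ∀ n : ℕ, N^[n] α < lam.ord := by
      intro n; induction n with
      | zero => simpa using hα
      | succ n ih => rw [Function.iterate_succ_apply']; exact (hN _ ih).1
    have hmono : ∀ n : ℕ, N^[n] α < N^[n+1] α := by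
      intro n; rw [Function.iterate_succ_apply']; exact (hN _ (hseq n)).2.1
    set δ := ⨆ n : ℕ, N^[n] α with hδ
    have hbdd : BddAbove (Set.range fun n : ℕ => N^[n] α) := Ordinal.bddAbove_range _
    have hδlam : δ < lam.ord := by
      apply Ordinal.iSup_lt_ord _ hseq
      rw [Cardinal.mk_nat, hcof]
      exact lt_of_le_of_lt hθ.aleph0_le hθlam
    have hle : ∀ n : ℕ, N^[n] α ≤ δ := fun n => le_ciSup hbdd n
    have hαδ : α < δ := by
      calc α = N^[0] α := by simp
        _ < N^[1] α := hmono 0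
        _ ≤ δ := hle 1
    have hlt : ∀ α' < δ, ∃ n : ℕ, α' < N^[n] α := by
      intro α' hα'
      exact (lt_ciSup_iff hbdd).mp hα'
    refine ⟨δ, ?_, hαδ⟩
    apply Set.mem_iInter₂.mpr
    intro j hj
    apply (hf j hj).2.2 δ hδlam (pos_iff_ne_zero.mp (lt_of_le_of_lt (zero_le (a := α)) hαδ))
    intro α' hα'
    obtain ⟨n, hn⟩ := hlt α' hα'
    obtain ⟨β, hβf, hβ1, hβ2⟩ := (hN _ (hseq n)).2.2 j hj
    rw [← Function.iterate_succ_apply' N n α] at hβ2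
    exact ⟨β, hβf, lt_trans hn hβ1, lt_of_le_of_lt hβ2 (lt_of_lt_of_le (hmono (n+1)) (hle (n+2)))⟩
  · -- closedness
    intro δ hδ hδ0 hcl
    apply Set.mem_iInter₂.mpr
    intro j hj
    apply (hf j hj).2.2 δ hδ hδ0
    intro α hα
    obtain ⟨β, hβ, h1, h2⟩ := hcl α hα
    exact ⟨β, Set.mem_iInter₂.mp hβ j hj, h1, h2⟩

lemma isClubIn_inter (hθ : θ.IsRegular) (hlam : lam.IsRegular) (hθlam : θ < lam)
    {C₁ C₂ : Set Ordinal.{0}} (h1 : IsClubIn C₁ lam.ord) (h2 : IsClubIn C₂ lam.ord) :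
    IsClubIn (C₁ ∩ C₂) lam.ord := by
  have key := isClubIn_biInter hθ hlam hθlam (fun j => if j = 0 then C₁ else C₂)
    (fun j hj => by split <;> [exact h1; exact h2])
  have : (⋂ j ∈ Set.Iio θ.ord, (if j = 0 then C₁ else C₂)) = C₁ ∩ C₂ := by
    ext γ
    simp only [Set.mem_iInter₂, Set.mem_inter_iff]
    constructor
    · intro h
      refine ⟨?_, ?_⟩
      · have := h 0 (aux_ord_pos hθ); rwa [if_pos rfl] at this
      · have := h 1 (aux_one_lt_ord hθ); rwa [if_neg one_ne_zero] at this
    · intro h j hj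
      split <;> [exact h.1; exact h.2]
  rwa [this] at key

lemma isClubIn_Ioi (hlam : lam.IsRegular) {α : Ordinal.{0}} (hα : α < lam.ord) :
    IsClubIn (Set.Ioi α ∩ Set.Iio lam.ord) lam.ord := by
  have hlim : Order.IsSuccLimit lam.ord := Cardinal.isSuccLimit_ord hlam.aleph0_le
  refine ⟨fun γ hγ => hγ.2, ?_, ?_⟩
  · intro α' hα'
    refine ⟨Order.succ (max α α'), ⟨?_, ?_⟩, ?_⟩
    · exact lt_of_le_of_lt (le_max_left α α') (Order.lt_succ (max α α'))
    · exact hlim.succ_lt (max_lt hα hα')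
    · exact lt_of_le_of_lt (le_max_right α α') (Order.lt_succ (max α α'))
  · intro δ hδ hδ0 hcl
    obtain ⟨β, hβ, _, hβδ⟩ := hcl 0 (pos_iff_ne_zero.mpr hδ0)
    exact ⟨lt_trans hβ.1 hβδ, hδ⟩

lemma isStationaryIn_inter_club (hθ : θ.IsRegular) (hlam : lam.IsRegular) (hθlam : θ < lam)
    {S C : Set Ordinal.{0}} (hS : IsStationaryIn S lam.ord) (hC : IsClubIn C lam.ord) :
    IsStationaryIn (S ∩ C) lam.ord := by
  refine ⟨fun γ hγ => hS.1 γ hγ.1, ?_⟩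
  intro C' hC'
  obtain ⟨γ, hγS, hγ⟩ := hS.2 (C ∩ C') (isClubIn_inter hθ hlam hθlam hC hC')
  exact ⟨γ, ⟨hγS, hγ.1⟩, hγ.2⟩

lemma exists_stationary_piece (hθ : θ.IsRegular) (hlam : lam.IsRegular) (hθlam : θ < lam)
    {W : Set Ordinal.{0}} (A : Ordinal.{0} → Set Ordinal.{0})
    (hW : IsStationaryIn W lam.ord) (hWA : W ⊆ ⋃ j ∈ Set.Iio θ.ord, A j)
    (hA : ∀ j < θ.ord, A j ⊆ Set.Iio lam.ord) :
    ∃ j < θ.ord, IsStationaryIn (A j) lam.ord := by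
  by_contra hcon
  push_neg at hcon
  have hclub : ∀ j (hj : j < θ.ord), ∃ C, IsClubIn C lam.ord ∧ A j ∩ C = ∅ := by
    intro j hj
    have := hcon j hj
    rw [IsStationaryIn] at this
    push_neg at this
    obtain ⟨C, hC, hCne⟩ := this (fun γ hγ => hA j hj hγ)
    exact ⟨C, hC, hCne⟩
  set f : Ordinal.{0} → Set Ordinal.{0} :=
    fun j => if h : j < θ.ord then (hclub j h).choose else Set.univ with hfdef
  have hfclub : ∀ j < θ.ord, IsClubIn (f j) lam.ord := by
    intro j hj; rw [hfdef]; simp only [dif_pos hj]; exact (hclub j hj).choose_spec.1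
  obtain ⟨γ, hγW, hγC⟩ := hW.2 _ (isClubIn_biInter hθ hlam hθlam f hfclub)
  obtain ⟨j, hj, hγA⟩ := by simpa using hWA hγW
  have hγfj : γ ∈ f j := Set.mem_iInter₂.mp hγC j hj
  rw [hfdef] at hγfj
  simp only [dif_pos hj] at hγfj
  have := (hclub j hj).choose_spec.2
  exact absurd (Set.mem_inter hγA hγfj) (by rw [this]; exact Set.notMem_empty γ)

end Aux

/-- If `D` is a transitive `θ`-covering matrix on `lam` and `S(D)` holds, then `CP(D)` holds,
witnessed by a stationary (in particular unbounded) subset `T` of `lam`. -/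
theorem matrixCP_of_matrixS_of_transitive (θ lam : Cardinal.{0})
    (hθ : θ.IsRegular) (hlam : lam.IsRegular) (hθlam : θ < lam)
    (D : Ordinal.{0} → Ordinal.{0} → Set Ordinal.{0})
    (hmat : IsCovMatrix θ.ord lam.ord D)
    (htrans : IsTransMatrix θ.ord lam.ord D)
    (hS : MatrixS θ lam.ord D) :
    ∃ T : Set Ordinal.{0}, IsStationaryIn T lam.ord ∧
      ∀ Z ⊆ T, #Z = Cardinal.lift.{1} θ → ∃ j < θ.ord, ∃ δ < lam.ord, Z ⊆ D j δ := by
  obtain ⟨S, hSstat, hSprop⟩ := hS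
  set A : Ordinal.{0} → Ordinal.{0} → Set Ordinal.{0} :=
    fun α j => {γ | γ ∈ S ∧ α < γ ∧ α ∈ D j γ} with hAdef
  have hAsub : ∀ α j, A α j ⊆ S := fun α j γ hγ => hγ.1
  have hSsub : ∀ γ ∈ S, γ < lam.ord := hSstat.1
  have step1 : ∀ α ∈ S, ∃ j < θ.ord, IsStationaryIn (A α j) lam.ord := by
    intro α hα
    have hαlam : α < lam.ord := hSsub α hα
    have hW : IsStationaryIn (S ∩ (Set.Ioi α ∩ Set.Iio lam.ord)) lam.ord :=
      isStationaryIn_inter_club hθ hlam hθlam hSstat (isClubIn_Ioi hlam hαlam)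
    apply exists_stationary_piece hθ hlam hθlam (A α) hW
    · intro γ hγ
      have hγS : γ ∈ S := hγ.1
      have hγα : α < γ := hγ.2.1
      have hγlam : γ < lam.ord := hγ.2.2
      have hmem : α ∈ ⋃ i ∈ Set.Iio θ.ord, D i γ := by
        rw [hmat.1 γ hγlam]; exact hγα
      obtain ⟨j, hj, hmemj⟩ := Set.mem_iUnion₂.mp hmem
      exact Set.mem_biUnion hj ⟨hγS, hγα, hmemj⟩
    · intro j hj γ hγ; exact hSsub γ hγ.1
  set B : Ordinal.{0} → Set Ordinal.{0} :=
    fun j => {α | α ∈ S ∧ IsStationaryIn (A α j) lam.ord} with hBdef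
  obtain ⟨js, hjs, hT⟩ : ∃ j < θ.ord, IsStationaryIn (B j) lam.ord := by
    apply exists_stationary_piece hθ hlam hθlam B hSstat
    · intro α hα
      obtain ⟨j, hj, hst⟩ := step1 α hα
      exact Set.mem_biUnion hj ⟨hα, hst⟩
    · intro j hj α hα; exact hSsub α hα.1
  refine ⟨B js, hT, ?_⟩
  intro Z hZT hZcard
  have hmk : #(Set.Iio θ.ord) = Cardinal.lift.{1} θ := by
    rw [Ordinal.mk_Iio_ordinal, Cardinal.card_ord]
  obtain ⟨e⟩ : Nonempty (↥(Set.Iio θ.ord) ≃ ↥Z) := Cardinal.eq.mp (hmk.trans hZcard.symm)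
  set Ss : Ordinal.{0} → Set Ordinal.{0} :=
    fun i => if h : i < θ.ord then A (e ⟨i, h⟩).1 js else ∅ with hSsdef
  have hSsval : ∀ i (h : i < θ.ord), Ss i = A (e ⟨i, h⟩).1 js := by
    intro i h; rw [hSsdef]; simp only [dif_pos h]
  have hSshyp : ∀ i < θ.ord, Ss i ⊆ S ∧ IsStationaryIn (Ss i) lam.ord := by
    intro i hi
    rw [hSsval i hi]
    have hmem : (e ⟨i, hi⟩).1 ∈ B js := hZT (e ⟨i, hi⟩).2
    exact ⟨hAsub _ _, hmem.2⟩
  obtain ⟨j, hj, β, hβ, hmeet⟩ := hSprop Ss hSshyp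
  refine ⟨max j js, max_lt hj hjs, β, hβ, ?_⟩
  intro α hαZ
  set i : ↥(Set.Iio θ.ord) := e.symm ⟨α, hαZ⟩ with hi
  obtain ⟨γ, hγSs, hγD⟩ := hmeet i.1 i.2
  rw [hSsval i.1 i.2] at hγSs
  have hei : (e ⟨i.1, i.2⟩).1 = α := by
    show (e (e.symm ⟨α, hαZ⟩)).1 = α
    rw [Equiv.apply_symm_apply]
  rw [hei] at hγSs
  have hγβ : γ < β := by
    have : γ ∈ Set.Iio β := by
      rw [← hmat.1 β hβ]; exact Set.mem_biUnion hj hγD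
    exact this
  have hγlam : γ < lam.ord := lt_trans hγβ hβ
  have hmaxlt : max j js < θ.ord := max_lt hj hjs
  have h1 : α ∈ D (max j js) γ :=
    hmat.2.1 js (max j js) (le_max_right _ _) hmaxlt γ hγlam hγSs.2.2
  have h2 : γ ∈ D (max j js) β :=
    hmat.2.1 j (max j js) (le_max_left _ _) hmaxlt β hβ hγD
  exact htrans (max j js) hmaxlt β hβ γ h2 h1
end

section
/- Let θ < λ < ν be regular cardinals with λ^θ < ν, let D be a θ-covering matrix on ν, and assume S(D) holds witnessed by a stationary set S. Then for every family {S_i : i < λ} of stationary subsets of S there are j < θ and β < ν such that S_i ∩ D(j,β) ≠ ∅ for all i < λ. -/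
open Cardinal Set

/-- If `θ < lam < ν` are regular, `lam ^ θ < ν`, `D` is a `θ`-covering matrix on `ν` and
`S(D)` holds witnessed by `S`, then every `lam`-indexed family of stationary subsets of `S`
meets a single entry of `D`. -/
theorem matrixS_lam_family (θ lam ν : Cardinal.{0})
    (hθ : θ.IsRegular) (hlam : lam.IsRegular) (hν : ν.IsRegular)
    (hθlam : θ < lam) (hlamν : lam < ν) (hpow : lam ^ θ < ν)
    (D : Ordinal.{0} → Ordinal.{0} → Set Ordinal.{0})
    (hmat : IsCovMatrix θ.ord ν.ord D)
    (S : Set Ordinal.{0}) (hS : IsStationaryIn S ν.ord)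
    (hSD : ∀ Ss : Ordinal.{0} → Set Ordinal.{0},
      (∀ i < θ.ord, Ss i ⊆ S ∧ IsStationaryIn (Ss i) ν.ord) →
      ∃ j < θ.ord, ∃ β < ν.ord, ∀ i < θ.ord, (Ss i ∩ D j β).Nonempty) :
    ∀ Ss : Ordinal.{0} → Set Ordinal.{0},
      (∀ i < lam.ord, Ss i ⊆ S ∧ IsStationaryIn (Ss i) ν.ord) →
      ∃ j < θ.ord, ∃ β < ν.ord, ∀ i < lam.ord, (Ss i ∩ D j β).Nonempty := by
  intro Ss hSs
  by_contra hcon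
  push_neg at hcon
  classical
  -- choice of a bad index for each (j, β)
  have key : ∀ j β, ∃ i : Set.Iio lam.ord, j < θ.ord → β < ν.ord → Ss i.val ∩ D j β = ∅ := by
    intro j β
    by_cases hj : j < θ.ord
    · by_cases hβ : β < ν.ord
      · obtain ⟨i, hi, hie⟩ := hcon j hj β hβ
        exact ⟨⟨i, hi⟩, fun _ _ => hie⟩
      · exact ⟨⟨0, by simpa using Cardinal.ord_lt_ord.mpr hlam.pos⟩, fun _ h => absurd h hβ⟩
    · exact ⟨⟨0, by simpa using Cardinal.ord_lt_ord.mpr hlam.pos⟩, fun h => absurd h hj⟩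
  choose F hF using key
  -- the small coding type for functions θ → lam
  set T : Type := θ.ord.ToType → lam.ord.ToType with hT
  have hTcard : (#T : Cardinal.{0}) = lam ^ θ := by
    rw [hT, Cardinal.mk_arrow, Cardinal.mk_ord_toType, Cardinal.mk_ord_toType,
      Cardinal.lift_id, Cardinal.lift_id]
  set enc : Set.Iio lam.ord → lam.ord.ToType := fun i => (Ordinal.ToType.mk (o := lam.ord)) i with henc
  set dec : θ.ord.ToType → Set.Iio θ.ord := fun x => (Ordinal.ToType.mk (o := θ.ord)).symm x with hdec
  set gfun : Set.Iio ν.ord → T := fun β x => enc (F (dec x).val β.val) with hgfun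
  have hνlim : Order.IsSuccLimit ν.ord := Cardinal.isSuccLimit_ord hν.aleph0_le
  -- some fiber of gfun is unbounded in ν.ord
  have hfiber : ∃ g : T, ∀ α < ν.ord, ∃ β : Set.Iio ν.ord, α < β.val ∧ gfun β = g := by
    by_contra hbdd
    push_neg at hbdd
    choose b hb using hbdd
    have hsup : (⨆ g : T, b g) < ν.ord :=
      Ordinal.iSup_lt_ord (by rw [hTcard, hν.cof_eq]; exact hpow) (fun g => (hb g).1)
    set s := (⨆ g : T, b g) with hs
    have hs1 : s + 1 < ν.ord := by rw [Ordinal.add_one_eq_succ]; exact hνlim.succ_lt hsup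
    set β : Set.Iio ν.ord := ⟨s + 1, hs1⟩ with hβdef
    have h1 : b (gfun β) ≤ s := Ordinal.le_iSup (fun g : T => b g) (gfun β)
    have h2 : b (gfun β) < β.val := by
      have : s < s + 1 := by
        rw [Ordinal.add_one_eq_succ]; exact Order.lt_succ s
      exact h1.trans_lt this
    exact (hb (gfun β)).2 β h2 rfl
  obtain ⟨g, hg⟩ := hfiber
  -- the θ-indexed family of stationary sets
  set Ss' : Ordinal → Set Ordinal := fun j =>
    if hj : j < θ.ord then
      Ss ((Ordinal.ToType.mk (o := lam.ord)).symm (g ((Ordinal.ToType.mk (o := θ.ord)) ⟨j, hj⟩))).val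
    else ∅ with hSs'
  have hSs'eq : ∀ j, ∀ hj : j < θ.ord, Ss' j =
      Ss ((Ordinal.ToType.mk (o := lam.ord)).symm (g ((Ordinal.ToType.mk (o := θ.ord)) ⟨j, hj⟩))).val := by
    intro j hj
    rw [hSs']
    simp [hj]
  have hSs'mem : ∀ j < θ.ord, Ss' j ⊆ S ∧ IsStationaryIn (Ss' j) ν.ord := by
    intro j hj
    rw [hSs'eq j hj]
    exact hSs _ ((Ordinal.ToType.mk (o := lam.ord)).symm _).2
  obtain ⟨j₀, hj₀, β₀, hβ₀, hmeet⟩ := hSD Ss' hSs'mem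
  -- pick β₁ in the fiber above β₀
  obtain ⟨β₁, hβ₁gt, hβ₁g⟩ := hg β₀ hβ₀
  -- directedness of the matrix
  obtain ⟨j₁, hj₁, hsub⟩ := hmat.2.2 β₀ β₁.val hβ₁gt β₁.2 j₀ hj₀
  set i₁ : Set.Iio lam.ord := F j₁ β₁.val with hi₁
  have hempty : Ss i₁.val ∩ D j₁ β₁.val = ∅ := hF j₁ β₁.val hj₁ β₁.2
  have hmj₁ := hmeet j₁ hj₁
  have hgval : g ((Ordinal.ToType.mk (o := θ.ord)) ⟨j₁, hj₁⟩) = enc i₁ := by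
    rw [← hβ₁g]
    show enc (F ((dec ((Ordinal.ToType.mk (o := θ.ord)) ⟨j₁, hj₁⟩))).val β₁.val) = enc i₁
    have hd : dec ((Ordinal.ToType.mk (o := θ.ord)) ⟨j₁, hj₁⟩) = ⟨j₁, hj₁⟩ :=
      OrderIso.symm_apply_apply _ _
    rw [hd, hi₁]
  have hSs'j₁ : Ss' j₁ = Ss i₁.val := by
    rw [hSs'eq j₁ hj₁, hgval]
    have : (Ordinal.ToType.mk (o := lam.ord)).symm (enc i₁) = i₁ :=
      OrderIso.symm_apply_apply _ _
    rw [this]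
  rw [hSs'j₁] at hmj₁
  obtain ⟨x, hx1, hx2⟩ := hmj₁
  have hx : x ∈ Ss i₁.val ∩ D j₁ β₁.val := ⟨hx1, hsub hx2⟩
  rw [hempty] at hx
  exact hx
end

section
/- Let θ be regular, λ ∈ (θ, θ^{+ω}) a regular cardinal (i.e., λ = θ^{+n} for some n ≥ 1), and ν > λ regular. Assume S(D) holds for a θ-covering matrix D on ν, witnessed by stationary S. Then for every family {S_i : i < λ} of stationary subsets of S there are j < θ and β < ν such that S_i ∩ D(j,β) ≠ ∅ for all i < λ. -/
open Cardinal Set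

lemma aux_bound {c ν : Cardinal.{0}} (hν : ν.IsRegular) (hc : c < ν)
    (f : Ordinal.{0} → Ordinal.{0}) (hf : ∀ ξ < c.ord, f ξ < ν.ord) :
    ∃ β < ν.ord, ∀ ξ < c.ord, f ξ ≤ β := by
  set g : c.ord.ToType → Ordinal.{0} := fun x => f ((Ordinal.ToType.mk (o := c.ord)).symm x) with hg
  have hb : iSup g < ν.ord := by
    apply Cardinal.iSup_lt_ord_of_isRegular hν
    · rw [Cardinal.mk_toType, Cardinal.card_ord]; exact hc
    · intro i; exact hf _ ((Ordinal.ToType.mk (o := c.ord)).symm i).2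
  refine ⟨iSup g, hb, fun ξ hξ => ?_⟩
  have := Ordinal.le_iSup g (Ordinal.ToType.mk (o := c.ord) ⟨ξ, hξ⟩)
  simpa [hg] using this

lemma aux_pigeonhole {θc lamc : Cardinal.{0}} (hlam : lamc.IsRegular) (hθlam : θc < lamc)
    (k : Ordinal.{0} → Ordinal.{0}) (hk : ∀ ξ < lamc.ord, k ξ < θc.ord) :
    ∃ j < θc.ord, ∀ α < lamc.ord, ∃ ξ, α < ξ ∧ ξ < lamc.ord ∧ k ξ = j := by
  by_contra h
  push_neg at h
  choose α hα hbad using h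
  set f : Ordinal.{0} → Ordinal.{0} :=
    fun j => if hj : j < θc.ord then α j hj else 0 with hf
  have hfν : ∀ j < θc.ord, f j < lamc.ord := by
    intro j hj; rw [hf]; simp only [dif_pos hj]; exact hα j hj
  obtain ⟨b, hb, hble⟩ := aux_bound hlam hθlam f hfν
  have hb1 : b + 1 < lamc.ord := (Cardinal.isSuccLimit_ord hlam.aleph0_le).succ_lt hb
  have hkb := hk _ hb1
  refine absurd rfl (hbad _ hkb (b+1) ?_ hb1)
  have := hble _ hkb
  rw [hf] at this; simp only [dif_pos hkb] at this
  exact lt_of_le_of_lt this (lt_add_one b)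

lemma aux_step (θc μ ν : Cardinal.{0}) (hθ : θc.IsRegular) (hθμ : θc ≤ μ)
    (hν : ν.IsRegular) (hlamν : Order.succ μ < ν)
    (D : Ordinal.{0} → Ordinal.{0} → Set Ordinal.{0})
    (hmat : IsCovMatrix θc.ord ν.ord D) (S : Set Ordinal.{0})
    (IH : ∀ Ss : Ordinal.{0} → Set Ordinal.{0},
      (∀ i < μ.ord, Ss i ⊆ S ∧ IsStationaryIn (Ss i) ν.ord) →
      ∃ j < θc.ord, ∃ β < ν.ord, ∀ i < μ.ord, (Ss i ∩ D j β).Nonempty) :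
    ∀ Ss : Ordinal.{0} → Set Ordinal.{0},
      (∀ i < (Order.succ μ).ord, Ss i ⊆ S ∧ IsStationaryIn (Ss i) ν.ord) →
      ∃ j < θc.ord, ∃ β < ν.ord, ∀ i < (Order.succ μ).ord, (Ss i ∩ D j β).Nonempty := by
  intro Ss hSs
  have hμ0 : ℵ₀ ≤ μ := hθ.aleph0_le.trans hθμ
  have hlamreg : (Order.succ μ).IsRegular := Cardinal.isRegular_succ hμ0
  have hlamlim : Order.IsSuccLimit (Order.succ μ).ord := Cardinal.isSuccLimit_ord hlamreg.aleph0_le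
  -- For each ξ < (succ μ).ord, apply IH to the reindexed family {Ss i : i ≤ ξ}
  have key : ∀ ξ, ∃ j β, ξ < (Order.succ μ).ord →
      j < θc.ord ∧ β < ν.ord ∧ ∀ i ≤ ξ, (Ss i ∩ D j β).Nonempty := by
    intro ξ
    by_cases hξ : ξ < (Order.succ μ).ord
    · -- build surjection from Iio μ.ord onto Iic ξ
      have hcard : #(Set.Iic ξ) ≤ #(Set.Iio μ.ord) := by
        have h1 : Set.Iic ξ = Set.Iio (ξ + 1) := by
          ext x; rw [Set.mem_Iic, Set.mem_Iio, Ordinal.add_one_eq_succ, Order.lt_succ_iff]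
        have h2 : (ξ + 1).card ≤ μ := by
          have := hlamlim.succ_lt hξ
          rw [Ordinal.add_one_eq_succ]
          have := (Cardinal.lt_ord.mp this)
          exact Order.lt_succ_iff.mp this
        rw [h1, Ordinal.mk_Iio_ordinal, Ordinal.mk_Iio_ordinal]
        rw [Cardinal.lift_le, Cardinal.card_ord]
        exact h2
      obtain ⟨emb⟩ := (Cardinal.le_def _ _).mp hcard
      have hne : Nonempty (Set.Iic ξ) := ⟨⟨0, zero_le (a := ξ)⟩⟩
      set g : Set.Iio μ.ord → Set.Iic ξ := Function.invFun emb with hgdef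
      have hgsurj : Function.Surjective g := Function.invFun_surjective emb.injective
      set Ss' : Ordinal.{0} → Set Ordinal.{0} :=
        fun i => if h : i < μ.ord then Ss (g ⟨i, h⟩ : Set.Iic ξ) else Ss 0 with hSs'
      have h1 : ∀ i < μ.ord, Ss' i ⊆ S ∧ IsStationaryIn (Ss' i) ν.ord := by
        intro i hi
        rw [hSs']; simp only [dif_pos hi]
        exact hSs _ (lt_of_le_of_lt (g ⟨i, hi⟩).2 hξ)
      obtain ⟨j, hj, β, hβ, hmeet⟩ := IH Ss' h1
      refine ⟨j, β, fun _ => ⟨hj, hβ, fun i hi => ?_⟩⟩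
      obtain ⟨⟨a, ha⟩, hga⟩ := hgsurj ⟨i, hi⟩
      have ha' : a < μ.ord := ha
      have h2 := hmeet a ha'
      rw [hSs'] at h2; simp only [dif_pos ha'] at h2
      have : (g ⟨a, ha'⟩ : Ordinal) = i := by rw [hga]
      rwa [this] at h2
    · exact ⟨0, 0, fun h => absurd h hξ⟩
  choose jf βf hjβ using key
  -- bound the β's
  obtain ⟨βs, hβs, hβsle⟩ := aux_bound hν (hlamν.trans_le le_rfl)
    βf (fun ξ hξ => (hjβ ξ hξ).2.1)
  have hγ : βs + 1 < ν.ord := (Cardinal.isSuccLimit_ord hν.aleph0_le).succ_lt hβs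
  -- directedness: get k ξ with D (jf ξ) (βf ξ) ⊆ D (k ξ) (βs+1)
  have hdir : ∀ ξ, ∃ k, ξ < (Order.succ μ).ord →
      k < θc.ord ∧ D (jf ξ) (βf ξ) ⊆ D k (βs + 1) := by
    intro ξ
    by_cases hξ : ξ < (Order.succ μ).ord
    · obtain ⟨k, hk, hsub⟩ := hmat.2.2 (βf ξ) (βs + 1)
        (lt_of_le_of_lt (hβsle ξ hξ) (lt_add_one βs)) hγ (jf ξ) (hjβ ξ hξ).1
      exact ⟨k, fun _ => ⟨hk, hsub⟩⟩
    · exact ⟨0, fun h => absurd h hξ⟩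
  choose kf hkf using hdir
  have hθlam : θc < Order.succ μ := hθμ.trans_lt (Order.lt_succ μ)
  obtain ⟨j, hjθ, hfib⟩ := aux_pigeonhole hlamreg hθlam kf
    (fun ξ hξ => (hkf ξ hξ).1)
  refine ⟨j, hjθ, βs + 1, hγ, fun i hi => ?_⟩
  obtain ⟨ξ, hiξ, hξ, hkξ⟩ := hfib i hi
  obtain ⟨x, hx1, hx2⟩ := (hjβ ξ hξ).2.2 i hiξ.le
  exact ⟨x, hx1, hkξ ▸ (hkf ξ hξ).2 hx2⟩

/-- If `θ` is regular, `lam = θ⁺ⁿ` for some `n ≥ 1`, `ν > lam` is regular, and `S(D)` holds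
for a `θ`-covering matrix `D` on `ν` witnessed by `S`, then every `lam`-indexed family of
stationary subsets of `S` meets a single entry of `D`. -/
theorem matrixS_lam_family_of_succ_iterate (θ lam ν : Cardinal.{0})
    (hθ : θ.IsRegular) (hlam : lam.IsRegular)
    (hsucc : ∃ n : ℕ, 1 ≤ n ∧ lam = (Order.succ)^[n] θ)
    (hν : ν.IsRegular) (hlamν : lam < ν)
    (D : Ordinal.{0} → Ordinal.{0} → Set Ordinal.{0})
    (hmat : IsCovMatrix θ.ord ν.ord D)
    (S : Set Ordinal.{0}) (hS : IsStationaryIn S ν.ord)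
    (hSD : ∀ Ss : Ordinal.{0} → Set Ordinal.{0},
      (∀ i < θ.ord, Ss i ⊆ S ∧ IsStationaryIn (Ss i) ν.ord) →
      ∃ j < θ.ord, ∃ β < ν.ord, ∀ i < θ.ord, (Ss i ∩ D j β).Nonempty) :
    ∀ Ss : Ordinal.{0} → Set Ordinal.{0},
      (∀ i < lam.ord, Ss i ⊆ S ∧ IsStationaryIn (Ss i) ν.ord) →
      ∃ j < θ.ord, ∃ β < ν.ord, ∀ i < lam.ord, (Ss i ∩ D j β).Nonempty := by
  obtain ⟨n, -, rfl⟩ := hsucc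
  suffices H : ∀ m : ℕ, (Order.succ)^[m] θ ≤ (Order.succ)^[n] θ →
      ∀ Ss : Ordinal.{0} → Set Ordinal.{0},
        (∀ i < ((Order.succ)^[m] θ).ord, Ss i ⊆ S ∧ IsStationaryIn (Ss i) ν.ord) →
        ∃ j < θ.ord, ∃ β < ν.ord, ∀ i < ((Order.succ)^[m] θ).ord, (Ss i ∩ D j β).Nonempty by
    exact H n le_rfl
  intro m
  induction m with
  | zero => intro _; exact hSD
  | succ m ih =>
    intro hle
    rw [Function.iterate_succ_apply'] at hle ⊢
    have hle' : (Order.succ)^[m] θ ≤ (Order.succ)^[n] θ :=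
      (Order.le_succ _).trans hle
    exact aux_step θ ((Order.succ)^[m] θ) ν hθ (Order.le_succ_iterate m θ) hν
      (hle.trans_lt hlamν) D hmat S (ih hle')
end

section
/- Assume D is a θ-covering matrix on λ, CP(D) holds witnessed by an unbounded set T ⊆ λ, and λ is θ-inaccessible. Then there are stationarily many δ < λ such that T ∩ δ ⊆ D(i,δ) for some i < θ. -/
open Cardinal Set

private lemma seq_lemma (lam : Cardinal.{0}) (hlam : lam.IsRegular) (κ : Cardinal.{0})
    (hκ : κ < lam) (b : Ordinal.{0}) (hb : b < lam.ord) (Next : Ordinal.{0} → Ordinal.{0})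
    (hNext : ∀ α, α < lam.ord → α < Next α ∧ Next α < lam.ord) :
    ∃ f : κ.ord.ToType → Ordinal.{0},
      ∀ x, f x = Next (b ⊔ ⨆ y : {y : κ.ord.ToType // y < x}, f y.1) ∧
        (b ⊔ ⨆ y : {y : κ.ord.ToType // y < x}, f y.1) < lam.ord := by
  classical
  have wf : WellFounded ((· < ·) : κ.ord.ToType → κ.ord.ToType → Prop) := wellFounded_lt
  set F : ∀ x : κ.ord.ToType, (∀ y, y < x → Ordinal.{0}) → Ordinal.{0} :=
    fun x ih => Next (b ⊔ ⨆ y : {y : κ.ord.ToType // y < x}, ih y.1 y.2) with hF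
  set f : κ.ord.ToType → Ordinal.{0} := fun x => wf.fix F x with hf
  have hfeq : ∀ x, f x = Next (b ⊔ ⨆ y : {y : κ.ord.ToType // y < x}, f y.1) := by
    intro x
    exact wf.fix_eq F x
  have hK : #(κ.ord.ToType) = κ := by rw [Cardinal.mk_toType, Cardinal.card_ord]
  have harg : ∀ x, (b ⊔ ⨆ y : {y : κ.ord.ToType // y < x}, f y.1) < lam.ord := by
    intro x
    refine wf.induction
      (C := fun x => (b ⊔ ⨆ y : {y : κ.ord.ToType // y < x}, f y.1) < lam.ord) x ?_
    intro x ih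
    refine max_lt hb (Ordinal.iSup_lt_ord ?_ ?_)
    · rw [hlam.cof_eq]
      exact lt_of_le_of_lt ((mk_subtype_le _).trans_eq hK) hκ
    · intro y
      rw [hfeq y.1]
      exact (hNext _ (ih y.1 y.2)).2
  exact ⟨f, fun x => ⟨hfeq x, harg x⟩⟩

/-- If `D` is a `θ`-covering matrix on a `θ`-inaccessible `lam` and `CP(D)` holds witnessed
by an unbounded `T ⊆ lam`, then there are stationarily many `δ < lam` with
`T ∩ δ ⊆ D i δ` for some `i < θ`. -/
theorem stationarily_many_initial_segments_covered (θ lam : Cardinal.{0})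
    (hθ : θ.IsRegular) (hlam : lam.IsRegular) (hθlam : θ < lam)
    (hinacc : ∀ ζ < lam, ζ ^ θ < lam)
    (D : Ordinal.{0} → Ordinal.{0} → Set Ordinal.{0})
    (hmat : IsCovMatrix θ.ord lam.ord D)
    (T : Set Ordinal.{0}) (hTsub : T ⊆ Set.Iio lam.ord)
    (hTunb : ∀ α < lam.ord, ∃ β ∈ T, α < β)
    (hTcov : ∀ Z ⊆ T, #Z = Cardinal.lift.{1} θ → ∃ i < θ.ord, ∃ β < lam.ord, Z ⊆ D i β) :
    IsStationaryIn {δ | δ < lam.ord ∧ ∃ i < θ.ord, T ∩ Set.Iio δ ⊆ D i δ} lam.ord := by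
  classical
  obtain ⟨hm1, hm2, hm3⟩ := hmat
  have hθω : ℵ₀ ≤ θ := hθ.aleph0_le
  have hlamω : ℵ₀ ≤ lam := hlam.aleph0_le
  have hcof : lam.ord.cof = lam := hlam.cof_eq
  have hordlim : Order.IsSuccLimit lam.ord := Cardinal.isSuccLimit_ord hlamω
  have hθcard : #(θ.ord.ToType) = θ := by rw [Cardinal.mk_toType, Cardinal.card_ord]
  refine ⟨fun γ hγ => hγ.1, fun C hC => ?_⟩
  obtain ⟨hC1, hC2, hC3⟩ := hC
  set ν : Cardinal.{0} := Order.succ θ with hνdef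
  have hθν : θ < ν := Order.lt_succ θ
  have hνreg : ν.IsRegular := Cardinal.isRegular_succ hθω
  have hνω : ℵ₀ ≤ ν := hθω.trans hθν.le
  have h2lam : (2 : Cardinal) ^ θ < lam :=
    hinacc 2 (lt_of_lt_of_le (by exact_mod_cast Cardinal.nat_lt_aleph0 2) hlamω)
  have hνlam : ν < lam := lt_of_le_of_lt (Order.succ_le_of_lt (Cardinal.cantor θ)) h2lam
  have hνcard : #(ν.ord.ToType) = ν := by rw [Cardinal.mk_toType, Cardinal.card_ord]
  -- Step 1: a bounded subset of `T` of size `θ`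
  set TN : Ordinal.{0} → Ordinal.{0} :=
    fun α => if h : α < lam.ord then (hTunb α h).choose else 0 with hTNdef
  have hTN : ∀ α, α < lam.ord → TN α ∈ T ∧ α < TN α ∧ TN α < lam.ord := by
    intro α h
    have hspec := (hTunb α h).choose_spec
    have heq : TN α = (hTunb α h).choose := by rw [hTNdef]; exact dif_pos h
    rw [heq]
    exact ⟨hspec.1, hspec.2, hTsub hspec.1⟩
  obtain ⟨p, hp⟩ := seq_lemma lam hlam θ hθlam 0 hordlim.pos TN (fun α h => (hTN α h).2)
  have ppos : ∀ x, (0 ⊔ ⨆ y : {y : θ.ord.ToType // y < x}, p y.1) < p x := by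
    intro x
    rw [(hp x).1]
    exact (hTN _ (hp x).2).2.1
  have plt : ∀ x, p x < lam.ord := by
    intro x
    rw [(hp x).1]
    exact (hTN _ (hp x).2).2.2
  have pT : ∀ x, p x ∈ T := by
    intro x
    rw [(hp x).1]
    exact (hTN _ (hp x).2).1
  have pmono : StrictMono p := by
    intro y x h
    calc p y ≤ ⨆ y' : {y' : θ.ord.ToType // y' < x}, p y'.1 :=
          le_ciSup (Ordinal.bddAbove_range _) (⟨y, h⟩ : {y' : θ.ord.ToType // y' < x})
      _ ≤ 0 ⊔ ⨆ y' : {y' : θ.ord.ToType // y' < x}, p y'.1 := le_sup_right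
      _ < p x := ppos x
  have hsupp : (⨆ x, p x) < lam.ord :=
    Ordinal.iSup_lt_ord (by rw [hcof, hθcard]; exact hθlam) plt
  set γ₀ : Ordinal.{0} := (⨆ x, p x) + 1 with hγ₀def
  have hγ₀ : γ₀ < lam.ord := by
    rw [hγ₀def, Ordinal.add_one_eq_succ]
    exact hordlim.succ_lt hsupp
  have hPsub : Set.range p ⊆ Set.Iio γ₀ := by
    rintro _ ⟨x, rfl⟩
    refine lt_of_le_of_lt (le_ciSup (Ordinal.bddAbove_range _) x) ?_
    rw [hγ₀def, Ordinal.add_one_eq_succ]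
    exact Order.lt_succ _
  have hPT : Set.range p ⊆ T := by rintro _ ⟨x, rfl⟩; exact pT x
  have hPcard : #(Set.range p) = Cardinal.lift.{1} θ := by
    have h2 := Cardinal.mk_range_eq_of_injective pmono.injective
    rwa [Cardinal.lift_uzero, hθcard] at h2
  -- Step 2: the club-and-covering step function
  have key1 : ∀ α, α < lam.ord → ∃ φ, φ ∈ C ∧ φ < lam.ord ∧ α < φ ∧
      ∀ Z : Set Ordinal.{0}, Z ⊆ T → Z ⊆ Set.Iio α → #Z = Cardinal.lift.{1} θ →
        ∃ i < θ.ord, ∃ β < φ, Z ⊆ D i β := by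
    intro α hα
    set ZS : (θ.ord.ToType → α.ToType) → Set Ordinal.{0} :=
      fun g => Set.range fun x => (((Ordinal.ToType.mk (o := α))).symm (g x) : Ordinal) with hZSdef
    set B : (θ.ord.ToType → α.ToType) → Ordinal.{0} :=
      fun g => sInf {β | β < lam.ord ∧ ∃ i < θ.ord, ZS g ⊆ D i β} with hBdef
    have hBlt : ∀ g, B g < lam.ord := by
      intro g
      by_cases h : {β | β < lam.ord ∧ ∃ i < θ.ord, ZS g ⊆ D i β}.Nonempty
      · exact (csInf_mem h).1
      · rw [hBdef]
        simp only [Set.not_nonempty_iff_eq_empty.mp h]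
        rw [Ordinal.sInf_empty]
        exact hordlim.pos
    have hIcard : #(θ.ord.ToType → α.ToType) = α.card ^ θ := by
      rw [← Cardinal.power_def, Cardinal.mk_toType, hθcard]
    have hcardα : α.card < lam := Cardinal.lt_ord.mp hα
    have hsB : (⨆ g, B g) < lam.ord :=
      Ordinal.iSup_lt_ord (by rw [hcof, hIcard]; exact hinacc _ hcardα) hBlt
    obtain ⟨φ, hφC, hφgt⟩ := hC2 (α ⊔ ⨆ g, B g) (max_lt hα hsB)
    refine ⟨φ, hφC, hC1 φ hφC, lt_of_le_of_lt le_sup_left hφgt, ?_⟩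
    intro Z hZT hZα hZcard
    have hE : Nonempty (θ.ord.ToType ≃ Z) := by
      rw [← Cardinal.lift_mk_eq', hθcard, Cardinal.lift_uzero]
      exact hZcard.symm
    obtain ⟨E⟩ := hE
    set g : θ.ord.ToType → α.ToType :=
      fun x => (Ordinal.ToType.mk (o := α)) ⟨(E x : Ordinal), hZα (E x).2⟩ with hgdef
    have hZg : ZS g = Z := by
      have h1 : ZS g = Set.range fun x => ((E x : Ordinal)) := by
        rw [hZSdef]
        refine congrArg Set.range ?_
        funext x
        rw [hgdef]
        simp
      rw [h1]
      ext z
      constructor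
      · rintro ⟨x, rfl⟩; exact (E x).2
      · intro hz
        exact ⟨E.symm ⟨z, hz⟩, by simp⟩
    have hne : {β | β < lam.ord ∧ ∃ i < θ.ord, ZS g ⊆ D i β}.Nonempty := by
      obtain ⟨i, hi, β, hβ, hsub⟩ := hTcov Z hZT hZcard
      exact ⟨β, hβ, i, hi, by rw [hZg]; exact hsub⟩
    have hmem : B g ∈ {β | β < lam.ord ∧ ∃ i < θ.ord, ZS g ⊆ D i β} := csInf_mem hne
    obtain ⟨hB1, i, hi, hB2⟩ := hmem
    refine ⟨i, hi, B g, ?_, by rw [← hZg]; exact hB2⟩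
    exact lt_of_le_of_lt ((le_ciSup (Ordinal.bddAbove_range _) g).trans le_sup_right) hφgt
  set Φ : Ordinal.{0} → Ordinal.{0} :=
    fun α => if h : α < lam.ord then (key1 α h).choose else 0 with hΦdef
  have hΦ : ∀ α, α < lam.ord → Φ α ∈ C ∧ Φ α < lam.ord ∧ α < Φ α ∧
      ∀ Z : Set Ordinal.{0}, Z ⊆ T → Z ⊆ Set.Iio α → #Z = Cardinal.lift.{1} θ →
        ∃ i < θ.ord, ∃ β < Φ α, Z ⊆ D i β := by
    intro α h
    have heq : Φ α = (key1 α h).choose := by rw [hΦdef]; exact dif_pos h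
    rw [heq]
    exact (key1 α h).choose_spec
  -- Step 3: the `ν`-chain
  obtain ⟨e, he⟩ := seq_lemma lam hlam ν hνlam γ₀ hγ₀ Φ
    (fun α h => ⟨(hΦ α h).2.2.1, (hΦ α h).2.1⟩)
  set arg : ν.ord.ToType → Ordinal.{0} :=
    fun x => γ₀ ⊔ ⨆ y : {y : ν.ord.ToType // y < x}, e y.1 with hargdef
  have hargΦ : ∀ x, e x = Φ (arg x) := fun x => (he x).1
  have harglt : ∀ x, arg x < lam.ord := fun x => (he x).2
  have heC : ∀ x, e x ∈ C := fun x => by rw [hargΦ x]; exact (hΦ _ (harglt x)).1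
  have helt : ∀ x, e x < lam.ord := fun x => by rw [hargΦ x]; exact (hΦ _ (harglt x)).2.1
  have hearg : ∀ x, arg x < e x := fun x => by rw [hargΦ x]; exact (hΦ _ (harglt x)).2.2.1
  have hmono : ∀ {y x : ν.ord.ToType}, y < x → e y < e x := by
    intro y x h
    calc e y ≤ ⨆ y' : {y' : ν.ord.ToType // y' < x}, e y'.1 :=
          le_ciSup (Ordinal.bddAbove_range _) (⟨y, h⟩ : {y' : ν.ord.ToType // y' < x})
      _ ≤ arg x := le_sup_right
      _ < e x := hearg x
  have hemono : ∀ {y x : ν.ord.ToType}, y ≤ x → e y ≤ e x := by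
    intro y x h
    rcases eq_or_lt_of_le h with rfl | h
    · exact le_rfl
    · exact (hmono h).le
  have hKne : Nonempty ν.ord.ToType := by
    rw [← mk_ne_zero_iff, hνcard]
    exact (aleph0_pos.trans_le hνω).ne'
  have hnomax : ∀ x : ν.ord.ToType, ∃ y, x < y := by
    intro x
    have hβ : (((Ordinal.ToType.mk (o := ν.ord))).symm x : Ordinal) < ν.ord :=
      (((Ordinal.ToType.mk (o := ν.ord))).symm x).2
    have hβ1 : (((Ordinal.ToType.mk (o := ν.ord))).symm x : Ordinal) + 1 < ν.ord := by
      rw [Ordinal.add_one_eq_succ]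
      exact (Cardinal.isSuccLimit_ord hνω).succ_lt hβ
    refine ⟨(Ordinal.ToType.mk (o := ν.ord)) ⟨_ + 1, Set.mem_Iio.mpr hβ1⟩, ?_⟩
    conv_lhs => rw [← ((Ordinal.ToType.mk (o := ν.ord))).apply_symm_apply x]
    rw [OrderIso.lt_iff_lt, Subtype.mk_lt_mk]
    rw [Ordinal.add_one_eq_succ]
    exact Order.lt_succ _
  set δ : Ordinal.{0} := ⨆ x, e x with hδdef
  have hδlam : δ < lam.ord := Ordinal.iSup_lt_ord (by rw [hcof, hνcard]; exact hνlam) helt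
  have hδx : ∀ x, e x ≤ δ := fun x => le_ciSup (Ordinal.bddAbove_range e) x
  have hexlt : ∀ x, e x < δ := by
    intro x
    obtain ⟨y, hy⟩ := hnomax x
    exact lt_of_lt_of_le (hmono hy) (hδx y)
  have hlt_ex : ∀ a, a < δ → ∃ x, a < e x := by
    intro a ha
    rw [hδdef] at ha
    exact (lt_ciSup_iff (Ordinal.bddAbove_range e)).mp ha
  have hδ0 : δ ≠ 0 := by
    obtain ⟨x⟩ := hKne
    exact (lt_of_le_of_lt (zero_le (a := arg x)) (lt_of_lt_of_le (hearg x) (hδx x))).ne'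
  have hδC : δ ∈ C := by
    refine hC3 δ hδlam hδ0 ?_
    intro a ha
    obtain ⟨x, hx⟩ := hlt_ex a ha
    exact ⟨e x, heC x, hx, hexlt x⟩
  refine ⟨δ, ⟨hδlam, ?_⟩, hδC⟩
  by_contra hcon
  push_neg at hcon
  have hchoice : ∀ i, i < θ.ord → ∃ s, s ∈ T ∧ s < δ ∧ s ∉ D i δ := by
    intro i hi
    obtain ⟨s, hs1, hs2⟩ := Set.not_subset.mp (hcon i hi)
    exact ⟨s, hs1.1, hs1.2, hs2⟩
  set t : Ordinal.{0} → Ordinal.{0} :=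
    fun i => if h : i < θ.ord then (hchoice i h).choose else 0 with htdef
  have ht : ∀ i, i < θ.ord → t i ∈ T ∧ t i < δ ∧ t i ∉ D i δ := by
    intro i h
    have heq : t i = (hchoice i h).choose := by rw [htdef]; exact dif_pos h
    rw [heq]
    exact (hchoice i h).choose_spec
  have hx : ∀ i, i < θ.ord → ∃ x : ν.ord.ToType, t i < e x :=
    fun i h => hlt_ex _ (ht i h).2.1
  set xf : Ordinal.{0} → ν.ord.ToType :=
    fun i => if h : i < θ.ord then (hx i h).choose else Classical.arbitrary _ with hxfdef
  have hxf : ∀ i, i < θ.ord → t i < e (xf i) := by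
    intro i h
    have heq : xf i = (hx i h).choose := by rw [hxfdef]; exact dif_pos h
    rw [heq]
    exact (hx i h).choose_spec
  set q : Ordinal.{0} → Ordinal.{0} :=
    fun i => (((Ordinal.ToType.mk (o := ν.ord))).symm (xf i) : Ordinal) with hqdef
  have hq : ∀ i, q i < ν.ord := fun i => (((Ordinal.ToType.mk (o := ν.ord))).symm (xf i)).2
  set ob : Ordinal.{0} :=
    ⨆ j : θ.ord.ToType, q (((Ordinal.ToType.mk (o := θ.ord))).symm j : Ordinal) with hobdef
  have hob : ob < ν.ord :=
    Ordinal.iSup_lt_ord (by rw [hνreg.cof_eq, hθcard]; exact hθν) (fun j => hq _)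
  set xstar : ν.ord.ToType := (Ordinal.ToType.mk (o := ν.ord)) ⟨ob, hob⟩ with hxstardef
  have hxstar : ∀ i, i < θ.ord → xf i ≤ xstar := by
    intro i hi
    have h1 : q i ≤ ob := by
      have heq : q i =
          q ((((Ordinal.ToType.mk (o := θ.ord))).symm ((Ordinal.ToType.mk (o := θ.ord)) ⟨i, hi⟩) : Ordinal)) := by
        rw [OrderIso.symm_apply_apply]
      rw [heq, hobdef]
      exact le_ciSup (Ordinal.bddAbove_range _) ((Ordinal.ToType.mk (o := θ.ord)) ⟨i, hi⟩)
    have h2 : ((Ordinal.ToType.mk (o := ν.ord))).symm (xf i) ≤ ⟨ob, hob⟩ := h1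
    calc xf i = (Ordinal.ToType.mk (o := ν.ord)) (((Ordinal.ToType.mk (o := ν.ord))).symm (xf i)) :=
          (((Ordinal.ToType.mk (o := ν.ord))).apply_symm_apply (xf i)).symm
      _ ≤ xstar := (OrderIso.le_iff_le _).mpr h2
  have htx : ∀ i, i < θ.ord → t i < e xstar :=
    fun i hi => lt_of_lt_of_le (hxf i hi) (hemono (hxstar i hi))
  obtain ⟨xp, hxp⟩ := hnomax xstar
  have hstar_arg : e xstar ≤ arg xp :=
    le_trans (le_ciSup (Ordinal.bddAbove_range _)
      (⟨xstar, hxp⟩ : {y : ν.ord.ToType // y < xp})) le_sup_right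
  have hγarg : γ₀ ≤ arg xp := le_sup_left
  set Z : Set Ordinal.{0} := Set.range p ∪ t '' Set.Iio θ.ord with hZdef
  have hZT : Z ⊆ T := by
    rintro z (hz | ⟨i, hi, rfl⟩)
    · exact hPT hz
    · exact (ht i hi).1
  have hZa : Z ⊆ Set.Iio (arg xp) := by
    rintro z (hz | ⟨i, hi, rfl⟩)
    · exact lt_of_lt_of_le (hPsub hz) hγarg
    · exact lt_of_lt_of_le (htx i hi) hstar_arg
  have hZle : #Z ≤ Cardinal.lift.{1} θ := by
    refine le_trans (Cardinal.mk_union_le _ _) ?_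
    have h1 : #(t '' Set.Iio θ.ord) ≤ Cardinal.lift.{1} θ := by
      refine le_trans Cardinal.mk_image_le ?_
      rw [Ordinal.mk_Iio_ordinal, Cardinal.card_ord]
    rw [hPcard]
    calc Cardinal.lift.{1} θ + #(t '' Set.Iio θ.ord) ≤
          Cardinal.lift.{1} θ + Cardinal.lift.{1} θ := add_le_add_right h1 _
      _ = Cardinal.lift.{1} θ := Cardinal.add_eq_self (Cardinal.aleph0_le_lift.mpr hθω)
  have hZcard : #Z = Cardinal.lift.{1} θ := by
    refine le_antisymm hZle ?_
    rw [← hPcard]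
    exact Cardinal.mk_le_mk_of_subset Set.subset_union_left
  obtain ⟨i, hi, β, hβ, hZD⟩ := (hΦ (arg xp) (harglt xp)).2.2.2 Z hZT hZa hZcard
  rw [← hargΦ xp] at hβ
  obtain ⟨j, hj, hsub⟩ := hm3 β δ (lt_of_lt_of_le hβ (hδx xp)) hδlam i hi
  exact (ht j hj).2.2 (hsub (hZD (Set.mem_union_right _ ⟨j, hj, rfl⟩)))
end

section
/- Assume λ is a regular cardinal that is either θ-inaccessible or equal to θ^{+n} for some 1 ≤ n < ω, D is a transitive θ-covering matrix on λ, and S(D) holds. Then there is an unbounded set A ⊆ λ such that every Z ∈ [A]^{<λ} is contained in some entry D(i,β) of D. -/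
open Cardinal Set

lemma sup_small {c : Cardinal.{0}} (hc : c.IsRegular) {A : Type 1}
    (hA : #A < Cardinal.lift.{1} c) (f : A → Ordinal.{0}) (hf : ∀ a, f a < c.ord) :
    ∃ β < c.ord, ∀ a, f a < β := by
  obtain ⟨ν, hν, hνe⟩ := Cardinal.lt_lift_iff.mp hA
  have he : Nonempty (ν.ord.ToType ≃ A) := by
    rw [← Cardinal.lift_mk_eq']
    rw [Cardinal.mk_toType, Cardinal.card_ord, hνe, Cardinal.lift_id'.{0,1}]
  obtain ⟨e⟩ := he
  have hsup : (⨆ i, f (e i)) < c.ord := by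
    refine Cardinal.iSup_lt_ord_of_isRegular hc ?_ (fun i => hf _)
    rwa [Cardinal.mk_toType, Cardinal.card_ord]
  refine ⟨(⨆ i, f (e i)) + 1, ?_, fun a => ?_⟩
  · exact (Cardinal.isSuccLimit_ord hc.aleph0_le).succ_lt hsup
  · have : f a ≤ ⨆ i, f (e i) := by
      have := Ordinal.le_iSup (fun i => f (e i)) (e.symm a)
      simpa using this
    exact this.trans_lt (Order.lt_succ _)

lemma fiber_unbounded {c t : Cardinal.{0}} (hc : c.IsRegular) (ht : t < c)
    (U : Set Ordinal.{0}) (hU : ∀ α < c.ord, ∃ x ∈ U, α < x)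
    (f : Ordinal.{0} → Ordinal.{0}) (hf : ∀ x ∈ U, f x < t.ord) :
    ∃ j < t.ord, ∀ α < c.ord, ∃ x ∈ U, α < x ∧ f x = j := by
  by_contra h
  push_neg at h
  choose! g hg1 hg2 using h
  have hA : #(↥(Iio t.ord)) < Cardinal.lift.{1} c := by
    rw [Ordinal.mk_Iio_ordinal, Cardinal.card_ord]
    exact Cardinal.lift_lt.2 ht
  obtain ⟨β, hβ, hb⟩ := sup_small hc hA (fun j => g j.1) (fun j => hg1 _ j.2)
  obtain ⟨x, hxU, hx⟩ := hU β hβ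
  have hfx := hf x hxU
  exact hg2 (f x) hfx x hxU ((hb ⟨f x, hfx⟩).trans hx) rfl

lemma ord_pos_of_ne_zero {t : Cardinal.{0}} (ht : t ≠ 0) : (0 : Ordinal) < t.ord := by
  rw [Cardinal.lt_ord]
  simpa using ht.bot_lt

lemma club_iInter {c t : Cardinal.{0}} (hc : c.IsRegular) (hω : ℵ₀ < c) (ht : t < c)
    (ht0 : t ≠ 0) (C : Ordinal.{0} → Set Ordinal.{0})
    (hC : ∀ j < t.ord, IsClubIn (C j) c.ord) :
    IsClubIn (⋂ j ∈ Iio t.ord, C j) c.ord := by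
  classical
  have h0 : (0 : Ordinal) < t.ord := ord_pos_of_ne_zero ht0
  have hlim : Order.IsSuccLimit (Cardinal.ord c) := Cardinal.isSuccLimit_ord hc.aleph0_le
  have hA : #(↥(Iio t.ord)) < Cardinal.lift.{1} c := by
    rw [Ordinal.mk_Iio_ordinal, Cardinal.card_ord]
    exact Cardinal.lift_lt.2 ht
  -- a step function
  have hstep : ∀ γ < c.ord, ∃ δ, γ < δ ∧ δ < c.ord ∧
      ∀ j < t.ord, ∃ x ∈ C j, γ < x ∧ x < δ := by
    intro γ hγ
    have hx : ∀ j : ↥(Iio t.ord), ∃ x ∈ C j.1, γ < x :=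
      fun j => (hC j.1 j.2).2.1 γ hγ
    choose b hb1 hb2 using hx
    have hblt : ∀ j : ↥(Iio t.ord), b j < c.ord := fun j => (hC j.1 j.2).1 _ (hb1 j)
    obtain ⟨δ0, hδ0, hδb⟩ := sup_small hc hA b hblt
    refine ⟨max δ0 (γ + 1), lt_of_lt_of_le (Order.lt_succ γ) ?_, ?_, ?_⟩
    · rw [← Ordinal.add_one_eq_succ]; exact le_max_right _ _
    · exact max_lt hδ0 (hlim.succ_lt hγ)
    · intro j hj
      exact ⟨b ⟨j, hj⟩, hb1 ⟨j, hj⟩, hb2 ⟨j, hj⟩, lt_of_lt_of_le (hδb ⟨j, hj⟩) (le_max_left _ _)⟩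
  choose! F hF1 hF2 hF3 using hstep
  refine ⟨?_, ?_, ?_⟩
  · intro γ hγ
    exact (hC 0 h0).1 γ (by exact mem_iInter₂.mp hγ 0 h0)
  · intro α hα
    set a : ℕ → Ordinal := fun n => F^[n] α with ha
    have key : ∀ n, a n < c.ord ∧ a n < a (n + 1) := by
      intro n
      induction n with
      | zero =>
        refine ⟨hα, ?_⟩
        have : a 1 = F (a 0) := by simp [ha]
        rw [this]; exact hF1 _ hα
      | succ n ih =>
        have hs : a (n + 2) = F (a (n + 1)) := by
          simp [ha, Function.iterate_succ_apply']
        have hs1 : a (n + 1) = F (a n) := by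
          simp [ha, Function.iterate_succ_apply']
        have h1 : a (n + 1) < c.ord := by rw [hs1]; exact hF2 _ ih.1
        exact ⟨h1, by rw [hs]; exact hF1 _ h1⟩
    have hbdd : BddAbove (Set.range a) := Ordinal.bddAbove_range a
    set δ := ⨆ n, a n with hδ
    have hδlt : δ < c.ord := by
      refine Cardinal.iSup_lt_ord_of_isRegular hc ?_ (fun n => (key n).1)
      rw [Cardinal.mk_nat]; exact hω
    have hle : ∀ n, a n ≤ δ := fun n => le_ciSup hbdd n
    have hδpos : α < δ := lt_of_lt_of_le (key 0).2 (hle 1)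
    have happrox : ∀ α' < δ, ∃ n, α' < a n := by
      intro α' hα'
      by_contra hn
      push_neg at hn
      exact absurd (ciSup_le hn) (not_le.2 hα')
    refine ⟨δ, ?_, hδpos⟩
    refine mem_iInter₂.mpr fun j hj => ?_
    refine (hC j hj).2.2 δ hδlt (by exact (lt_of_le_of_lt (zero_le (a := α)) hδpos).ne') ?_
    intro α' hα'
    obtain ⟨n, hn⟩ := happrox α' hα'
    obtain ⟨x, hx1, hx2, hx3⟩ := hF3 (a n) (key n).1 j hj
    have : a n.succ = F (a n) := by simp [ha, Function.iterate_succ_apply']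
    exact ⟨x, hx1, hn.trans hx2, lt_of_lt_of_le (this ▸ hx3) (hle (n + 1))⟩
  · intro δ hδ hδ0 happ
    refine mem_iInter₂.mpr fun j hj => ?_
    refine (hC j hj).2.2 δ hδ hδ0 fun α' hα' => ?_
    obtain ⟨β, hβ, h1, h2⟩ := happ α' hα'
    exact ⟨β, mem_iInter₂.mp hβ j hj, h1, h2⟩

lemma club_Ioo {c : Cardinal.{0}} (hc : c.IsRegular) {γ : Ordinal.{0}} (hγ : γ < c.ord) :
    IsClubIn {x | γ < x ∧ x < c.ord} c.ord := by
  have hlim : Order.IsSuccLimit (Cardinal.ord c) := Cardinal.isSuccLimit_ord hc.aleph0_le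
  refine ⟨fun x hx => hx.2, fun α hα => ?_, fun δ hδ hδ0 happ => ?_⟩
  · exact ⟨max γ α + 1, ⟨lt_of_le_of_lt (le_max_left _ _) (Order.lt_succ _),
      hlim.succ_lt (max_lt hγ hα)⟩, lt_of_le_of_lt (le_max_right _ _) (Order.lt_succ _)⟩
  · obtain ⟨β, hβ, _, hβδ⟩ := happ 0 (pos_iff_ne_zero.2 hδ0)
    exact ⟨hβ.1.trans hβδ, hδ⟩

lemma club_inter {c : Cardinal.{0}} (hc : c.IsRegular) (hω : ℵ₀ < c)
    {A B : Set Ordinal.{0}} (hA : IsClubIn A c.ord) (hB : IsClubIn B c.ord) :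
    IsClubIn (A ∩ B) c.ord := by
  classical
  have h := club_iInter hc hω hω (by simp [Cardinal.aleph0_ne_zero])
    (fun j => if j = 0 then A else B) ?_
  · have he : (⋂ j ∈ Iio (ℵ₀ : Cardinal).ord, (if j = 0 then A else B)) = A ∩ B := by
      have h1lt : (1 : Ordinal) < (ℵ₀ : Cardinal).ord := by
        rw [Cardinal.ord_aleph0]; exact Ordinal.one_lt_omega0
      have h0lt : (0 : Ordinal) < (ℵ₀ : Cardinal).ord := lt_trans zero_lt_one h1lt
      ext x
      constructor
      · intro hx
        have hx0 := mem_iInter₂.mp hx 0 h0lt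
        have hx1 := mem_iInter₂.mp hx 1 h1lt
        simp at hx0 hx1
        exact ⟨hx0, hx1⟩
      · intro hx
        refine mem_iInter₂.mpr fun j _ => ?_
        by_cases hj : j = 0 <;> simp [hj, hx.1, hx.2]
    rwa [he] at h
  · intro j _
    by_cases hj : j = 0 <;> simp [hj, hA, hB]

lemma stationary_tail {c : Cardinal.{0}} (hc : c.IsRegular) (hω : ℵ₀ < c)
    {S : Set Ordinal.{0}} (hS : IsStationaryIn S c.ord) {γ : Ordinal.{0}} (hγ : γ < c.ord) :
    IsStationaryIn {α | α ∈ S ∧ γ < α} c.ord := by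
  refine ⟨fun x hx => hS.1 x hx.1, fun C hC => ?_⟩
  obtain ⟨x, hxS, hxC⟩ := hS.2 _ (club_inter hc hω hC (club_Ioo hc hγ))
  exact ⟨x, ⟨hxS, hxC.2.1⟩, hxC.1⟩

/-- a stationary set covered by `< c` many sets has a stationary piece. -/
lemma stationary_piece {c t : Cardinal.{0}} (hc : c.IsRegular) (hω : ℵ₀ < c) (ht : t < c)
    (ht0 : t ≠ 0) {S : Set Ordinal.{0}} (hS : IsStationaryIn S c.ord)
    (T : Ordinal.{0} → Set Ordinal.{0}) (hcov : ∀ α ∈ S, ∃ j < t.ord, α ∈ T j) :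
    ∃ j < t.ord, IsStationaryIn (S ∩ T j) c.ord := by
  classical
  by_contra h
  push_neg at h
  have hns : ∀ j < t.ord, ∃ C, IsClubIn C c.ord ∧ (S ∩ T j) ∩ C = ∅ := by
    intro j hj
    have := h j hj
    rw [IsStationaryIn] at this
    push_neg at this
    obtain ⟨C, hC, hCe⟩ := this fun γ hγ => hS.1 γ hγ.1
    exact ⟨C, hC, hCe⟩
  choose! Cf hCf1 hCf2 using hns
  have hclub := club_iInter hc hω ht ht0 Cf hCf1
  obtain ⟨x, hxS, hxC⟩ := hS.2 _ hclub
  obtain ⟨j, hj, hxT⟩ := hcov x hxS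
  have : x ∈ (S ∩ T j) ∩ Cf j := ⟨⟨hxS, hxT⟩, mem_iInter₂.mp hxC j hj⟩
  rw [hCf2 j hj] at this
  exact this

lemma base_cover {θ lam : Cardinal.{0}} (hθ : θ.IsRegular) (hlam : lam.IsRegular)
    (hθlam : θ < lam) (D : Ordinal.{0} → Ordinal.{0} → Set Ordinal.{0})
    (hmat : IsCovMatrix θ.ord lam.ord D) (htrans : IsTransMatrix θ.ord lam.ord D)
    (hS : MatrixS θ lam.ord D) :
    ∃ A : Set Ordinal.{0}, A ⊆ Set.Iio lam.ord ∧ (∀ α < lam.ord, ∃ β ∈ A, α < β) ∧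
      ∀ Z ⊆ A, #Z ≤ Cardinal.lift.{1} θ → ∃ i < θ.ord, ∃ β < lam.ord, Z ⊆ D i β := by
  classical
  have hω : ℵ₀ < lam := lt_of_le_of_lt hθ.aleph0_le hθlam
  have hθ0 : θ ≠ 0 := hθ.pos.ne'
  have hθordpos : (0 : Ordinal) < θ.ord := ord_pos_of_ne_zero hθ0
  have hlamordpos : (0 : Ordinal) < lam.ord := ord_pos_of_ne_zero hlam.pos.ne'
  obtain ⟨S, hSst, hSmeet⟩ := hS
  set T : Ordinal → Ordinal → Set Ordinal :=
    fun γ j => {α | α ∈ S ∧ γ < α ∧ γ ∈ D j α} with hT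
  -- step 1: for each γ there is j with T γ j stationary
  have hstep1 : ∀ γ < lam.ord, ∃ j < θ.ord, IsStationaryIn (T γ j) lam.ord := by
    intro γ hγ
    have htail : IsStationaryIn {α | α ∈ S ∧ γ < α} lam.ord :=
      stationary_tail hlam hω hSst hγ
    have hcov : ∀ α ∈ {α | α ∈ S ∧ γ < α}, ∃ j < θ.ord, α ∈ {α | γ ∈ D j α} := by
      rintro α ⟨hαS, hγα⟩
      have hαlt : α < lam.ord := hSst.1 α hαS
      have : γ ∈ ⋃ i ∈ Set.Iio θ.ord, D i α := by
        rw [hmat.1 α hαlt]; exact hγα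
      obtain ⟨i, hi, hmem⟩ := mem_iUnion₂.mp this
      exact ⟨i, hi, hmem⟩
    obtain ⟨j, hj, hst⟩ := stationary_piece hlam hω hθlam hθ0 htail _ hcov
    refine ⟨j, hj, ?_⟩
    have : {α | α ∈ S ∧ γ < α} ∩ {α | γ ∈ D j α} = T γ j := by
      ext x
      simp only [hT, mem_inter_iff, mem_setOf_eq]
      tauto
    rwa [this] at hst
  choose! jf hjf1 hjf2 using hstep1
  obtain ⟨js, hjs, hfib⟩ := fiber_unbounded hlam hθlam (Iio lam.ord)
    (fun α hα => ⟨α + 1, (Cardinal.isSuccLimit_ord hlam.aleph0_le).succ_lt hα, Order.lt_succ _⟩)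
    jf (fun x hx => hjf1 x hx)
  refine ⟨{γ | γ < lam.ord ∧ IsStationaryIn (T γ js) lam.ord}, fun γ hγ => hγ.1, ?_, ?_⟩
  · intro α hα
    obtain ⟨x, hx, hαx, hjx⟩ := hfib α hα
    exact ⟨x, ⟨hx, hjx ▸ hjf2 x hx⟩, hαx⟩
  · intro Z hZA hZcard
    rcases Z.eq_empty_or_nonempty with rfl | hne
    · exact ⟨0, hθordpos, 0, hlamordpos, empty_subset _⟩
    haveI := hne.to_subtype
    have hle : #(↥Z) ≤ #(↥(Iio θ.ord)) := by
      rwa [Ordinal.mk_Iio_ordinal, Cardinal.card_ord]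
    obtain ⟨f⟩ := Cardinal.le_def _ _ |>.mp hle
    set g : ↥(Iio θ.ord) → ↥Z := Function.invFun f with hg
    have hgsurj : Function.Surjective g := Function.invFun_surjective f.injective
    set Ss : Ordinal → Set Ordinal :=
      fun i => if h : i < θ.ord then T (g ⟨i, h⟩).1 js else S with hSs
    have hprem : ∀ i < θ.ord, Ss i ⊆ S ∧ IsStationaryIn (Ss i) lam.ord := by
      intro i hi
      have hmem : ((g ⟨i, hi⟩ : ↥Z) : Ordinal) ∈ Z := (g ⟨i, hi⟩).2
      have hA := hZA hmem
      constructor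
      · intro x hx
        rw [hSs] at hx
        simp only [dif_pos hi] at hx
        exact hx.1
      · rw [hSs]
        simp only [dif_pos hi]
        exact hA.2
    obtain ⟨j, hj, β, hβ, hmeets⟩ := hSmeet Ss hprem
    refine ⟨max j js, max_lt hj hjs, β, hβ, ?_⟩
    intro z hz
    obtain ⟨i0, hi0⟩ := hgsurj ⟨z, hz⟩
    obtain ⟨α, hαT, hαD⟩ := hmeets i0.1 i0.2
    have hSseq : Ss i0.1 = T z js := by
      rw [hSs]
      have : (⟨(i0 : Ordinal), i0.2⟩ : ↥(Iio θ.ord)) = i0 := Subtype.eta _ _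
      simp only [dif_pos i0.2, this, hi0]
      exact dif_pos i0.2
    rw [hSseq] at hαT
    obtain ⟨hαS, hzα, hzD⟩ := hαT
    have hαlt : α < lam.ord := hSst.1 α hαS
    have h1 : z ∈ D (max j js) α :=
      hmat.2.1 js (max j js) (le_max_right _ _) (max_lt hj hjs) α hαlt hzD
    have h2 : α ∈ D (max j js) β :=
      hmat.2.1 j (max j js) (le_max_left _ _) (max_lt hj hjs) β hβ hαD
    exact htrans (max j js) (max_lt hj hjs) β hβ α h2 h1

lemma step_cover {θ lam κ' : Cardinal.{0}} (hθ : θ.IsRegular) (hlam : lam.IsRegular)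
    (hκ : κ'.IsRegular) (hθκ : θ < κ') (hκlam : κ' < lam)
    (D : Ordinal.{0} → Ordinal.{0} → Set Ordinal.{0})
    (hmat : IsCovMatrix θ.ord lam.ord D) {A : Set Ordinal.{0}}
    (H : ∀ Z ⊆ A, #Z < Cardinal.lift.{1} κ' → ∃ i < θ.ord, ∃ β < lam.ord, Z ⊆ D i β) :
    ∀ Z ⊆ A, #Z ≤ Cardinal.lift.{1} κ' → ∃ i < θ.ord, ∃ β < lam.ord, Z ⊆ D i β := by
  classical
  intro Z hZA hZ
  rcases hZ.lt_or_eq with h | h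
  · exact H Z hZA h
  have hκlim : Order.IsSuccLimit (Cardinal.ord κ') := Cardinal.isSuccLimit_ord hκ.aleph0_le
  have he : Nonempty (κ'.ord.ToType ≃ ↥Z) := by
    rw [← Cardinal.lift_mk_eq', Cardinal.mk_toType, Cardinal.card_ord, ← h,
      Cardinal.lift_id'.{0,1}]
  obtain ⟨e⟩ := he
  set en := Ordinal.ToType.mk (o := κ'.ord) with hen
  set zfun : Ordinal → Ordinal :=
    fun η => if h : η < κ'.ord then ((e (en ⟨η, h⟩) : ↥Z) : Ordinal) else 0 with hzfun
  have hzcomp : ∀ i : ↥(Iio κ'.ord), zfun i.1 = ((e (en i) : ↥Z) : Ordinal) := by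
    intro i
    have hi : i.1 < κ'.ord := i.2
    rw [hzfun]
    simp only [dif_pos hi, Subtype.eta]
  have hzZ : ∀ η, η < κ'.ord → zfun η ∈ Z := by
    intro η hη
    rw [hzcomp ⟨η, hη⟩]
    exact (e (en ⟨η, hη⟩)).2
  have hsurj : ∀ z ∈ Z, ∃ η < κ'.ord, zfun η = z := by
    intro z hz
    refine ⟨(en.symm (e.symm ⟨z, hz⟩)).1, (en.symm (e.symm ⟨z, hz⟩)).2, ?_⟩
    rw [hzcomp (en.symm (e.symm ⟨z, hz⟩))]
    simp
  set Zp : Ordinal → Set Ordinal := fun ξ => zfun '' (Iio ξ) with hZp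
  have hHa : ∀ ξ < κ'.ord, ∃ i < θ.ord, ∃ β < lam.ord, Zp ξ ⊆ D i β := by
    intro ξ hξ
    refine H (Zp ξ) ?_ ?_
    · rintro x ⟨η, hη, rfl⟩
      exact hZA (hzZ η (lt_trans hη hξ))
    · calc #(Zp ξ) ≤ #(Iio ξ) := Cardinal.mk_image_le
        _ = Cardinal.lift.{1} ξ.card := Ordinal.mk_Iio_ordinal ξ
        _ < Cardinal.lift.{1} κ' := Cardinal.lift_lt.2 (Cardinal.lt_ord.mp hξ)
  choose! ifun hi bfun hb hsub using hHa
  have hA : #(↥(Iio κ'.ord)) < Cardinal.lift.{1} lam := by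
    rw [Ordinal.mk_Iio_ordinal, Cardinal.card_ord]
    exact Cardinal.lift_lt.2 hκlam
  obtain ⟨βs, hβs, hbb⟩ := sup_small hlam hA (fun ξ => bfun ξ.1)
    (fun ξ => hb ξ.1 ξ.2)
  have hcoh : ∀ ξ < κ'.ord, ∃ j < θ.ord, D (ifun ξ) (bfun ξ) ⊆ D j βs := by
    intro ξ hξ
    exact hmat.2.2 (bfun ξ) βs (hbb ⟨ξ, hξ⟩) hβs (ifun ξ) (hi ξ hξ)
  choose! jfun hj hjsub using hcoh
  obtain ⟨js, hjs, hfib⟩ := fiber_unbounded hκ hθκ (Iio κ'.ord)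
    (fun α hα => ⟨α + 1, hκlim.succ_lt hα, Order.lt_succ _⟩) jfun hj
  refine ⟨js, hjs, βs, hβs, ?_⟩
  intro z hz
  obtain ⟨η, hη, hzeq⟩ := hsurj z hz
  obtain ⟨ξ, hξ, hηξ, hjξ⟩ := hfib η hη
  have hzmem : z ∈ Zp ξ := ⟨η, hηξ, hzeq⟩
  have := hjsub ξ hξ (hsub ξ hξ hzmem)
  rwa [hjξ] at this

lemma inacc_cover {θ lam : Cardinal.{0}} (hθ : θ.IsRegular) (hlam : lam.IsRegular)
    (hθlam : θ < lam) (hpow : ∀ ζ < lam, ζ ^ θ < lam)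
    (D : Ordinal.{0} → Ordinal.{0} → Set Ordinal.{0})
    (hmat : IsCovMatrix θ.ord lam.ord D) {A : Set Ordinal.{0}}
    (Hbase : ∀ Z ⊆ A, #Z ≤ Cardinal.lift.{1} θ → ∃ i < θ.ord, ∃ β < lam.ord, Z ⊆ D i β) :
    ∀ Z ⊆ A, #Z < Cardinal.lift.{1} lam → ∃ i < θ.ord, ∃ β < lam.ord, Z ⊆ D i β := by
  classical
  intro Z hZA hZ
  rcases le_or_gt (#(↥Z)) (Cardinal.lift.{1} θ) with hc | hc
  · exact Hbase Z hZA hc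
  obtain ⟨μ, hμlam, hμeq⟩ := Cardinal.lt_lift_iff.mp hZ
  have hPc : ∀ t : {t : Set Ordinal.{0} // t ⊆ Z ∧ #t ≤ Cardinal.lift.{1} θ},
      ∃ i < θ.ord, ∃ β < lam.ord, t.1 ⊆ D i β :=
    fun t => Hbase t.1 (t.2.1.trans hZA) t.2.2
  choose ifun hi bfun hb hsub using hPc
  have hPcard : #{t : Set Ordinal.{0} // t ⊆ Z ∧ #t ≤ Cardinal.lift.{1} θ} <
      Cardinal.lift.{1} lam := by
    have hℵ : ℵ₀ ≤ #(↥Z) := by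
      refine le_trans ?_ hc.le
      rw [← Cardinal.lift_aleph0.{1,0}]
      exact Cardinal.lift_le.2 hθ.aleph0_le
    calc #{t : Set Ordinal.{0} // t ⊆ Z ∧ #t ≤ Cardinal.lift.{1} θ}
        ≤ max #(↥Z) ℵ₀ ^ Cardinal.lift.{1} θ := Cardinal.mk_bounded_subset_le Z _
      _ = #(↥Z) ^ Cardinal.lift.{1} θ := by rw [max_eq_left hℵ]
      _ = Cardinal.lift.{1} (μ ^ θ) := by rw [← hμeq, ← Cardinal.lift_power]
      _ < Cardinal.lift.{1} lam := Cardinal.lift_lt.2 (hpow μ hμlam)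
  obtain ⟨βs, hβs, hbb⟩ := sup_small hlam hPcard bfun hb
  have hcoh : ∀ t : {t : Set Ordinal.{0} // t ⊆ Z ∧ #t ≤ Cardinal.lift.{1} θ},
      ∃ j < θ.ord, D (ifun t) (bfun t) ⊆ D j βs :=
    fun t => hmat.2.2 (bfun t) βs (hbb t) hβs (ifun t) (hi t)
  choose jfun hj hjsub using hcoh
  by_contra hcon
  push_neg at hcon
  have hesc : ∀ j < θ.ord, ∃ γ ∈ Z, γ ∉ D j βs := by
    intro j hjθ
    exact not_subset.mp (hcon j hjθ βs hβs)
  choose! gfun hg1 hg2 using hesc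
  have hxsub : gfun '' (Iio θ.ord) ⊆ Z := by
    rintro _ ⟨j, hj', rfl⟩
    exact hg1 j hj'
  have hxcard : #(↥(gfun '' (Iio θ.ord))) ≤ Cardinal.lift.{1} θ := by
    refine Cardinal.mk_image_le.trans ?_
    rw [Ordinal.mk_Iio_ordinal, Cardinal.card_ord]
  set t : {t : Set Ordinal.{0} // t ⊆ Z ∧ #t ≤ Cardinal.lift.{1} θ} :=
    ⟨gfun '' (Iio θ.ord), hxsub, hxcard⟩ with ht
  have hγ : gfun (jfun t) ∈ gfun '' (Iio θ.ord) := ⟨jfun t, hj t, rfl⟩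
  exact hg2 (jfun t) (hj t) (hjsub t (hsub t hγ))

/-- If `lam` is regular and either `θ`-inaccessible or `θ⁺ⁿ` for some `1 ≤ n`, `D` is a
transitive `θ`-covering matrix on `lam` and `S(D)` holds, then there is an unbounded
`A ⊆ lam` with `[A]^{<lam}` covered by `D`. -/
theorem unbounded_small_subsets_covered (θ lam : Cardinal.{0})
    (hθ : θ.IsRegular) (hlam : lam.IsRegular) (hθlam : θ < lam)
    (hcase : (∀ ζ < lam, ζ ^ θ < lam) ∨ (∃ n : ℕ, 1 ≤ n ∧ lam = (Order.succ)^[n] θ))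
    (D : Ordinal.{0} → Ordinal.{0} → Set Ordinal.{0})
    (hmat : IsCovMatrix θ.ord lam.ord D)
    (htrans : IsTransMatrix θ.ord lam.ord D)
    (hS : MatrixS θ lam.ord D) :
    ∃ A : Set Ordinal.{0}, A ⊆ Set.Iio lam.ord ∧ (∀ α < lam.ord, ∃ β ∈ A, α < β) ∧
      ∀ Z ⊆ A, #Z < Cardinal.lift.{1} lam → ∃ i < θ.ord, ∃ β < lam.ord, Z ⊆ D i β := by
  obtain ⟨A, hA1, hA2, hA3⟩ := base_cover hθ hlam hθlam D hmat htrans hS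
  refine ⟨A, hA1, hA2, ?_⟩
  have hlemono : ∀ m : ℕ, θ ≤ (Order.succ)^[m] θ := by
    intro m
    induction m with
    | zero => exact le_rfl
    | succ m ih =>
      rw [Function.iterate_succ_apply']
      exact ih.trans (Order.le_succ _)
  rcases hcase with hpow | ⟨n, hn, hlameq⟩
  · exact inacc_cover hθ hlam hθlam hpow D hmat hA3
  · have hiter : ∀ k : ℕ, (Order.succ)^[k] θ < lam →
        ∀ Z ⊆ A, #Z ≤ Cardinal.lift.{1} ((Order.succ)^[k] θ) →
        ∃ i < θ.ord, ∃ β < lam.ord, Z ⊆ D i β := by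
      intro k
      induction k with
      | zero => exact fun _ Z hZ hc => hA3 Z hZ hc
      | succ k ih =>
        intro hlt Z hZ hc
        set κ := (Order.succ)^[k] θ with hκ
        have hhi : (Order.succ)^[k+1] θ = Order.succ κ := Function.iterate_succ_apply' _ _ _
        have hκlt : κ < lam := lt_trans (Order.lt_succ κ) (hhi ▸ hlt)
        have haleph : ℵ₀ ≤ κ := hθ.aleph0_le.trans (hlemono k)
        have H : ∀ W ⊆ A, #(↥W) < Cardinal.lift.{1} (Order.succ κ) →
            ∃ i < θ.ord, ∃ β < lam.ord, W ⊆ D i β := by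
          intro W hW hWc
          rw [Cardinal.lift_succ, Order.lt_succ_iff] at hWc
          exact ih hκlt W hW hWc
        rw [hhi] at hc hlt
        exact step_cover hθ hlam (Cardinal.isRegular_succ haleph)
          (lt_of_le_of_lt (hlemono k) (Order.lt_succ κ)) hlt D hmat H Z hZ hc
    intro Z hZ hc
    rcases n with _ | m
    · omega
    have hlt : (Order.succ)^[m] θ < lam := by
      rw [hlameq, Function.iterate_succ_apply']
      exact Order.lt_succ _
    refine hiter m hlt Z hZ ?_
    rw [hlameq, Function.iterate_succ_apply', Cardinal.lift_succ, Order.lt_succ_iff] at hc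
    exact hc
end

section
/- Let κ be singular of cofinality θ and let d : [κ⁺]² → θ be a coloring such that each set D(i,β) = {α < β : d(α,β) ≤ i} has cardinality less than κ (d is normal). If every δ in a set X ⊆ κ⁺ is d-approachable, then every δ ∈ X is weakly approachable with respect to some fixed sequence E = {e_α : α < κ⁺} of subsets of κ⁺ each of size < κ. -/
open Cardinal Set

/-- The entry `{α < β | d α β ≤ i}` of the matrix associated to a coloring `d`. -/
def colorEntry (d : Ordinal.{0} → Ordinal.{0} → Ordinal.{0}) (i β : Ordinal.{0}) :
    Set Ordinal.{0} :=
  {α | α < β ∧ d α β ≤ i}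

/-- A coloring `d : [κ⁺]² → θ` is normal if each `colorEntry d i β` has size `< κ`. -/
def IsNormalColoring (κ θ ν : Cardinal.{0})
    (d : Ordinal.{0} → Ordinal.{0} → Ordinal.{0}) : Prop :=
  (∀ α β, d α β < θ.ord) ∧
    ∀ i < θ.ord, ∀ β < ν.ord, #(colorEntry d i β) < Cardinal.lift.{1} κ

/-- `δ` is `d`-approachable: some unbounded `H ⊆ δ` has `d [[H]²]` bounded below `θ`. -/
def DApproachable (θ : Cardinal.{0}) (d : Ordinal.{0} → Ordinal.{0} → Ordinal.{0})
    (δ : Ordinal.{0}) : Prop :=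
  ∃ H : Set Ordinal.{0}, H ⊆ Set.Iio δ ∧ (∀ α < δ, ∃ β ∈ H, α < β) ∧
    ∃ i < θ.ord, ∀ α ∈ H, ∀ β ∈ H, α < β → d α β ≤ i

/-- `δ` is weakly approachable with respect to `E`: some `H` unbounded in `δ` of order type
`cof δ` has all its initial segments covered by `{E α : α < δ}`. -/
def WeaklyApproachable (E : Ordinal.{0} → Set Ordinal.{0}) (δ : Ordinal.{0}) : Prop :=
  ∃ H : Set Ordinal.{0}, H ⊆ Set.Iio δ ∧ (∀ α < δ, ∃ β ∈ H, α < β) ∧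
    otp H = Ordinal.lift.{1} (Ordinal.cof δ).ord ∧
    ∀ γ < δ, ∃ α < δ, H ∩ Set.Iio γ ⊆ E α

lemma otp_empty : otp (∅ : Set Ordinal.{0}) = 0 := by
  rw [otp, Ordinal.type_eq_zero_iff_isEmpty]
  infer_instance

/-- cardinality lower bound for unbounded subsets -/
lemma lift_cof_le_mk {δ : Ordinal.{0}} (A : Set Ordinal.{0}) (hA : A ⊆ Iio δ)
    (hunb : ∀ α < δ, ∃ β ∈ A, α < β) : Cardinal.lift.{1} δ.cof ≤ #A := by
  classical
  set e := Ordinal.ToType.mk (o := δ) with he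
  set A' : Set δ.ToType := {x | (e.symm x).val ∈ A} with hA'
  have hunb' : Set.Unbounded (· < ·) A' := by
    intro x
    obtain ⟨β, hβA, hβ⟩ := hunb (e.symm x).val (e.symm x).2
    refine ⟨e ⟨β, hA hβA⟩, by simp [hA', hβA], ?_⟩
    intro hlt
    have := e.symm.lt_iff_lt.2 hlt
    simp only [OrderIso.symm_apply_apply] at this
    exact absurd hβ (not_lt.2 (le_of_lt this))
  have h1 : δ.cof ≤ #A' := by
    haveI : IsWellOrder δ.ToType (· < ·) := isWellOrder_lt
    have := Order.cof_le (α := δ.ToType) (s := A')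
      (fun x => by obtain ⟨y, hy, h⟩ := hunb' x; exact ⟨y, hy, not_lt.1 h⟩)
    rwa [Ordinal.cof_toType] at this
  have h2 : Cardinal.lift.{1} #A' = Cardinal.lift.{0} #A := by
    refine Cardinal.lift_mk_eq'.2 ⟨Equiv.ofBijective
      (fun x : A' => (⟨(e.symm x.1).val, x.2⟩ : A)) ⟨?_, ?_⟩⟩
    · intro a b hab
      have h1 : ((e.symm a.1 : _) : Ordinal) = (e.symm b.1 : Ordinal) := by simpa using congrArg Subtype.val hab
      exact Subtype.ext (e.symm.injective (Subtype.ext h1))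
    · rintro ⟨a, ha⟩
      exact ⟨⟨e ⟨a, hA ha⟩, by simp [hA', ha]⟩, by simp⟩
  calc Cardinal.lift.{1} δ.cof ≤ Cardinal.lift.{1} #A' := Cardinal.lift_le.2 h1
    _ = Cardinal.lift.{0} #A := h2
    _ = #A := Cardinal.lift_id' _

lemma exists_otp_cof {δ : Ordinal.{0}} (hδ : Order.IsSuccLimit δ) (H : Set Ordinal.{0})
    (hH : H ⊆ Iio δ) (hunb : ∀ α < δ, ∃ β ∈ H, α < β) :
    ∃ H' : Set Ordinal.{0}, H' ⊆ H ∧ (∀ α < δ, ∃ β ∈ H', α < β) ∧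
      otp H' = Ordinal.lift.{1} (Ordinal.cof δ).ord := by
  classical
  haveI : IsWellOrder δ.ToType (· < ·) := isWellOrder_lt
  obtain ⟨S, hSunb, hStype⟩ :=
    Ordinal.exists_ord_cof_eq δ.ToType
  rw [Ordinal.cof_toType] at hStype
  set e := Ordinal.ToType.mk (o := δ) with he
  set g : δ.ToType → Ordinal.{0} := fun x => (e.symm x).val with hg
  have hginj : Function.Injective g := fun a b hab =>
    e.symm.injective (Subtype.ext hab)
  set C : Set Ordinal.{0} := g '' S with hC
  have hCsub : C ⊆ Iio δ := by rintro _ ⟨x, _, rfl⟩; exact (e.symm x).2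
  have hCunb : ∀ α < δ, ∃ c ∈ C, α < c := by
    intro α hα
    obtain ⟨y, hyS, hy⟩ := hSunb (e ⟨Order.succ α, hδ.succ_lt hα⟩)
    refine ⟨g y, ⟨y, hyS, rfl⟩, ?_⟩
    have : e ⟨Order.succ α, hδ.succ_lt hα⟩ ≤ y := hy
    have h2 : (⟨Order.succ α, hδ.succ_lt hα⟩ : Iio δ) ≤ e.symm y := by
      simpa using e.symm.le_iff_le.2 this
    exact lt_of_lt_of_le (Order.lt_succ α) h2
  have hCotp : otp C = Ordinal.lift.{1} (Ordinal.cof δ).ord := by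
    rw [← hStype]
    have iso : (Subrel ((· < ·) : δ.ToType → δ.ToType → Prop) (· ∈ S)) ≃r
        (Subrel ((· < ·) : Ordinal.{0} → Ordinal.{0} → Prop) (· ∈ C)) := by
      refine ⟨Equiv.Set.image g S hginj, ?_⟩
      rintro ⟨a, ha⟩ ⟨b, hb⟩
      show (g a < g b) ↔ a < b
      constructor
      · intro h
        by_contra hba
        rcases lt_or_eq_of_le (not_lt.1 hba) with h' | h'
        · exact absurd (e.symm.lt_iff_lt.2 h') (not_lt.2 (le_of_lt h))
        · exact absurd (congrArg g h'.symm) (ne_of_lt h)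
      · intro h
        exact e.symm.lt_iff_lt.2 h
    have := RelIso.ordinal_lift_type_eq iso
    rw [Ordinal.lift_id'] at this
    exact this.symm
  -- now the choosing map G
  set G : Ordinal.{0} → Ordinal.{0} := fun c => sInf {h | h ∈ H ∧ c < h} with hGdef
  have hGne : ∀ c < δ, {h | h ∈ H ∧ c < h}.Nonempty := by
    intro c hc
    obtain ⟨β, hβ, hcβ⟩ := hunb c hc
    exact ⟨β, hβ, hcβ⟩
  have hGmem : ∀ c < δ, G c ∈ H ∧ c < G c := fun c hc => csInf_mem (hGne c hc)
  set H' : Set Ordinal.{0} := G '' C with hH'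
  have hH'H : H' ⊆ H := by
    rintro _ ⟨c, hc, rfl⟩; exact (hGmem c (hCsub hc)).1
  have hH'unb : ∀ α < δ, ∃ β ∈ H', α < β := by
    intro α hα
    obtain ⟨c, hcC, hαc⟩ := hCunb α hα
    exact ⟨G c, ⟨c, hcC, rfl⟩, lt_trans hαc (hGmem c (hCsub hcC)).2⟩
  refine ⟨H', hH'H, hH'unb, le_antisymm ?_ ?_⟩
  · -- otp H' ≤ otp C
    rw [← hCotp]
    set F : Ordinal.{0} → Ordinal.{0} := fun h => sInf {c | c ∈ C ∧ G c = h} with hF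
    have hFmem : ∀ h ∈ H', F h ∈ C ∧ G (F h) = h := by
      intro h hh
      obtain ⟨c, hcC, hch⟩ := hh
      exact csInf_mem (s := {c | c ∈ C ∧ G c = h}) ⟨c, hcC, hch⟩
    have hmono : ∀ a b : ↥H', (a : Ordinal) < b → F a < F b := by
      rintro ⟨a, ha⟩ ⟨b, hb⟩ hab
      by_contra hba
      have hle : F b ≤ F a := not_lt.1 hba
      have hGm : G (F b) ≤ G (F a) := by
        apply csInf_le_csInf (OrderBot.bddBelow _)
          (hGne (F a) (hCsub (hFmem a ha).1))
        rintro x ⟨hx1, hx2⟩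
        exact ⟨hx1, lt_of_le_of_lt hle hx2⟩
      rw [(hFmem a ha).2, (hFmem b hb).2] at hGm
      exact absurd hab (not_lt.2 hGm)
    exact (RelEmbedding.ofMonotone
      (fun a : ↥H' => (⟨F a, (hFmem a a.2).1⟩ : ↥C)) hmono).ordinal_type_le
  · -- lower bound
    have h1 : Cardinal.lift.{1} δ.cof ≤ #↥H' :=
      lift_cof_le_mk H' (fun x hx => hH (hH'H hx)) hH'unb
    have h2 : (Cardinal.lift.{1} δ.cof).ord ≤ otp H' := by
      have : #↥H' = (otp H').card := (Ordinal.card_type _).symm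
      rw [this] at h1
      exact le_trans (Cardinal.ord_le_ord.2 h1) (Cardinal.ord_card_le _)
    rwa [← Cardinal.lift_ord] at h2


/-- If `κ` is singular of cofinality `θ`, `d` is a normal coloring of pairs from `κ⁺`, and
every `δ ∈ X` is `d`-approachable, then there is a single sequence `E` of subsets of `κ⁺`,
each of size `< κ`, with respect to which every `δ ∈ X` is weakly approachable. -/
theorem weaklyApproachable_of_dApproachable (κ θ : Cardinal.{0})
    (hκinf : Cardinal.aleph0 ≤ κ) (hκsing : ¬κ.IsRegular) (hθ : κ.ord.cof = θ)
    (d : Ordinal.{0} → Ordinal.{0} → Ordinal.{0})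
    (hd : IsNormalColoring κ θ (Order.succ κ) d)
    (X : Set Ordinal.{0}) (hX : X ⊆ Set.Iio (Order.succ κ).ord)
    (happr : ∀ δ ∈ X, DApproachable θ d δ) :
    ∃ E : Ordinal.{0} → Set Ordinal.{0},
      (∀ α < (Order.succ κ).ord, E α ⊆ Set.Iio (Order.succ κ).ord ∧
        #(E α) < Cardinal.lift.{1} κ) ∧
      ∀ δ ∈ X, WeaklyApproachable E δ := by
  classical
  have hθinf : ℵ₀ ≤ θ := by
    rw [← hθ]
    exact Ordinal.aleph0_le_cof.2 (Cardinal.isSuccLimit_ord hκinf)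
  have hθκ : θ < κ := by
    rw [← hθ]
    by_contra hle
    exact hκsing ⟨hκinf, by rw [hθ] at hle ⊢; exact not_lt.1 hle⟩
  have hθ0 : θ.ord ≠ 0 := by
    have h1 : (0 : Ordinal) < θ.ord :=
      Cardinal.lt_ord.2 (by simpa using lt_of_lt_of_le Cardinal.aleph0_pos hθinf)
    exact ne_of_gt h1
  -- pairing bijection
  have hmk : #(↥(Iio θ.ord) × ↥(Iio θ.ord)) = #(↥(Iio θ.ord)) := by
    rw [Cardinal.mk_prod, Ordinal.mk_Iio_ordinal, Cardinal.card_ord]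
    simp only [Cardinal.lift_id]
    rw [← Cardinal.lift_mul, Cardinal.mul_eq_self hθinf]
  obtain ⟨φ⟩ : Nonempty (↥(Iio θ.ord) ≃ ↥(Iio θ.ord) × ↥(Iio θ.ord)) :=
    Cardinal.eq.1 hmk.symm
  set dec : Ordinal.{0} → ↥(Iio θ.ord) × ↥(Iio θ.ord) :=
    fun α => φ ⟨α % θ.ord, Ordinal.mod_lt α hθ0⟩ with hdec
  set iF : Ordinal.{0} → Ordinal.{0} := fun α => ((dec α).1 : Ordinal) with hiF
  set βF : Ordinal.{0} → Ordinal.{0} :=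
    fun α => θ.ord * (α / θ.ord) + ((dec α).2 : Ordinal) with hβF
  set lo : Ordinal.{0} → Ordinal.{0} :=
    fun α => sInf {x | #(Set.Ico x α) < Cardinal.lift.{1} κ} with hlo
  have hκ0 : (0 : Cardinal.{1}) < Cardinal.lift.{1} κ := by
    have h0 : (0 : Cardinal.{0}) < κ := lt_of_lt_of_le Cardinal.aleph0_pos hκinf
    simpa using Cardinal.lift_lt.{0,1}.2 h0
  have hlomem : ∀ α, #(Set.Ico (lo α) α) < Cardinal.lift.{1} κ := by
    intro α
    exact csInf_mem (s := {x | #(Set.Ico x α) < Cardinal.lift.{1} κ})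
      ⟨α, by simp [hκ0]⟩
  have hlole : ∀ α x, #(Set.Ico x α) < Cardinal.lift.{1} κ → lo α ≤ x :=
    fun α x hx => csInf_le (OrderBot.bddBelow _) hx
  set E : Ordinal.{0} → Set Ordinal.{0} :=
    fun α => Set.Ico (lo α) α ∪ colorEntry d (iF α) (βF α) with hE
  have hiFθ : ∀ α, iF α < θ.ord := fun α => ((dec α).1).2
  have hβFκ : ∀ α < (Order.succ κ).ord, βF α < (Order.succ κ).ord := by
    intro α hα
    rw [Cardinal.lt_ord] at hα ⊢
    have hj : ((dec α).2 : Ordinal).card ≤ κ := by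
      have := Cardinal.lt_ord.1 ((dec α).2).2
      exact le_trans (le_of_lt this) (le_of_lt hθκ)
    have hq : (α / θ.ord).card ≤ κ := by
      have h1 : α / θ.ord ≤ α :=
        le_trans (Ordinal.le_mul_right _ (pos_iff_ne_zero.2 hθ0))
          (Ordinal.mul_div_le α θ.ord)
      exact le_trans (Ordinal.card_le_card h1) (Order.lt_succ_iff.1 hα)
    rw [Ordinal.card_add, Ordinal.card_mul, Cardinal.card_ord]
    have h2 : θ * (α / θ.ord).card + ((dec α).2 : Ordinal).card ≤ κ := by
      calc θ * (α / θ.ord).card + ((dec α).2 : Ordinal).card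
          ≤ κ * κ + κ := add_le_add (mul_le_mul' (le_of_lt hθκ) hq) hj
        _ = κ := by rw [Cardinal.mul_eq_self hκinf, Cardinal.add_eq_self hκinf]
    exact lt_of_le_of_lt h2 (Order.lt_succ κ)
  refine ⟨E, ?_, ?_⟩
  · -- size and subset bounds
    intro α hα
    constructor
    · rintro x (hx | hx)
      · exact lt_trans hx.2 hα
      · exact lt_trans hx.1 (hβFκ α hα)
    · refine lt_of_le_of_lt (Cardinal.mk_union_le _ _) ?_
      refine Cardinal.add_lt_of_lt ?_ (hlomem α) ?_
      · rw [← Cardinal.lift_aleph0.{1,0}]; exact Cardinal.lift_le.2 hκinf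
      · exact hd.2 (iF α) (hiFθ α) (βF α) (hβFκ α hα)
  · -- main part
    intro δ hδX
    rcases Ordinal.zero_or_succ_or_isSuccLimit δ with hδ0 | ⟨a, hδa⟩ | hlim
    · subst hδ0
      refine ⟨∅, empty_subset _, fun α hα => absurd hα (by simp : ¬ α < 0), ?_,
        fun γ hγ => absurd hγ (by simp : ¬ γ < 0)⟩
      rw [otp_empty]
      simp
    · exfalso
      obtain ⟨H, hHsub, hHunb, _⟩ := happr δ hδX
      obtain ⟨β, hβH, haβ⟩ := hHunb a (hδa ▸ Order.lt_succ a)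
      have : β < δ := hHsub hβH
      rw [← hδa, Order.lt_succ_iff] at this
      exact absurd haβ (not_lt.2 this)
    · obtain ⟨H, hHsub, hHunb, i₀, hi₀, hbound⟩ := happr δ hδX
      by_cases hP : ∃ Λ₀ < δ, ∀ γ < δ, #(Set.Ico Λ₀ γ) < Cardinal.lift.{1} κ
      · -- Case A
        obtain ⟨Λ₀, hΛ₀δ, hΛ₀⟩ := hP
        obtain ⟨H', hH'sub, hH'unb, hH'otp⟩ :=
          exists_otp_cof hlim (Set.Ico Λ₀ δ) (fun x hx => hx.2)
            (fun a ha => ⟨max (Order.succ a) Λ₀,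
              ⟨le_max_right _ _, max_lt (hlim.succ_lt ha) hΛ₀δ⟩,
              lt_of_lt_of_le (Order.lt_succ a) (le_max_left _ _)⟩)
        refine ⟨H', fun x hx => (hH'sub hx).2, hH'unb, hH'otp, ?_⟩
        intro γ hγ
        refine ⟨Order.succ γ, hlim.succ_lt hγ, ?_⟩
        rintro x ⟨hxH', hxγ⟩
        left
        refine ⟨le_trans (hlole _ Λ₀ (hΛ₀ _ (hlim.succ_lt hγ))) (hH'sub hxH').1,
          lt_trans hxγ (Order.lt_succ γ)⟩
      · -- Case B
        push_neg at hP
        have hmod : δ % θ.ord = 0 := by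
          by_contra hr
          set Λ₀ := θ.ord * (δ / θ.ord) with hΛ₀def
          have hΛ₀δ : Λ₀ < δ := by
            conv_rhs => rw [← Ordinal.div_add_mod δ θ.ord]
            exact lt_add_of_pos_right _ (pos_iff_ne_zero.2 hr)
          obtain ⟨γ, hγδ, hγcard⟩ := hP Λ₀ hΛ₀δ
          refine absurd hγcard (not_le.2 ?_)
          have hinj : #(Set.Ico Λ₀ γ) ≤ #(Set.Iio (δ % θ.ord)) := by
            refine Cardinal.mk_le_of_injective
              (f := fun x : Set.Ico Λ₀ γ => (⟨x.1 - Λ₀, ?_⟩ : Set.Iio (δ % θ.ord))) ?_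
            · have hx : x.1 < Λ₀ + δ % θ.ord := by
                rw [Ordinal.div_add_mod δ θ.ord]
                exact lt_trans x.2.2 hγδ
              exact (Ordinal.sub_lt_of_le x.2.1).2 hx
            · intro a b hab
              have h1 : a.1 - Λ₀ = b.1 - Λ₀ := congrArg Subtype.val hab
              have h2 : Λ₀ + (a.1 - Λ₀) = Λ₀ + (b.1 - Λ₀) := by rw [h1]
              rw [Ordinal.add_sub_cancel_of_le a.2.1, Ordinal.add_sub_cancel_of_le b.2.1] at h2
              exact Subtype.ext h2
          refine lt_of_le_of_lt hinj ?_
          rw [Ordinal.mk_Iio_ordinal]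
          have : (δ % θ.ord).card < θ := Cardinal.lt_ord.1 (Ordinal.mod_lt δ hθ0)
          exact lt_trans (Cardinal.lift_lt.2 this) (Cardinal.lift_lt.2 hθκ)
        have hdvd : θ.ord * (δ / θ.ord) = δ := by
          conv_rhs => rw [← Ordinal.div_add_mod δ θ.ord]
          rw [hmod, add_zero]
        obtain ⟨H', hH'H, hH'unb, hH'otp⟩ := exists_otp_cof hlim H hHsub hHunb
        refine ⟨H', fun x hx => hHsub (hH'H hx), hH'unb, hH'otp, ?_⟩
        intro γ hγ
        obtain ⟨β, hβH', hγβ⟩ := hH'unb γ hγ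
        set q := β / θ.ord with hqdef
        set j := β % θ.ord with hjdef
        have hjθ : j < θ.ord := Ordinal.mod_lt β hθ0
        set ξ : ↥(Iio θ.ord) := φ.symm (⟨i₀, hi₀⟩, ⟨j, hjθ⟩) with hξ
        set α := θ.ord * q + ξ.1 with hα
        have hβδ : β < δ := hHsub (hH'H hβH')
        have hqlt : Order.succ q ≤ δ / θ.ord := by
          rw [Order.succ_le_iff]
          by_contra hle
          have h1 : δ / θ.ord ≤ q := not_lt.1 hle
          have h2 : δ ≤ θ.ord * q := by
            rw [← hdvd]; exact mul_le_mul_right h1 _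
          exact absurd (lt_of_le_of_lt (le_trans h2 (Ordinal.mul_div_le β θ.ord)) hβδ)
            (lt_irrefl δ)
        have hαδ : α < δ := by
          have h1 : α < θ.ord * Order.succ q := by
            rw [Ordinal.mul_succ]
            exact add_lt_add_right (show ξ.1 < θ.ord from ξ.2) _
          exact lt_of_lt_of_le h1 (le_trans (mul_le_mul_right hqlt _) (le_of_eq hdvd))
        have hmodα : α % θ.ord = ξ.1 := by
          rw [hα, Ordinal.mul_add_mod_self, Ordinal.mod_eq_of_lt ξ.2]
        have hdivα : α / θ.ord = q := by
          rw [hα, Ordinal.mul_add_div q hθ0, Ordinal.div_eq_zero_of_lt ξ.2, add_zero]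
        have hdecα : dec α = (⟨i₀, hi₀⟩, ⟨j, hjθ⟩) := by
          have h1 : (⟨α % θ.ord, Ordinal.mod_lt α hθ0⟩ : ↥(Iio θ.ord)) = ξ :=
            Subtype.ext hmodα
          show φ ⟨α % θ.ord, Ordinal.mod_lt α hθ0⟩ = _
          rw [h1, hξ, Equiv.apply_symm_apply]
        have hiFα : iF α = i₀ := by rw [hiF]; simp only [hdecα]
        have hβFα : βF α = β := by
          rw [hβF]; simp only [hdecα, hdivα]
          exact Ordinal.div_add_mod β θ.ord
        refine ⟨α, hαδ, ?_⟩
        rintro x ⟨hxH', hxγ⟩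
        right
        rw [hiFα, hβFα]  -- may fail: goal mentions colorEntry d (iF α) (βF α)
        exact ⟨lt_trans hxγ hγβ, hbound x (hH'H hxH') β (hH'H hβH') (lt_trans hxγ hγβ)⟩
end

section
/- Suppose M is an elementary substructure of H(μ) (for μ large enough regular) with κ⁺ ∈ M, |M ∩ κ| < ℵ_n and |M ∩ κ⁺| = ℵ_n, where κ is a singular cardinal. Then the order type of M ∩ κ⁺ equals ℵ_n. -/
open Cardinal Set

/-- The von Neumann ordinal in `ZFSet` corresponding to an ordinal. -/
noncomputable def vN : Ordinal.{0} → ZFSet.{0}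
  | o => ZFSet.range fun x : o.ToType =>
      vN (@Ordinal.typein o.ToType (· < ·) isWellOrder_lt x)
  termination_by o => o
  decreasing_by exact Ordinal.typein_lt_self x

/-- `x` is hereditarily of cardinality `< μ`: the domain of `H(μ)`. -/
inductive HereditarilyLt (μ : Cardinal.{0}) : ZFSet.{0} → Prop
  | intro (x : ZFSet.{0}) (hcard : #x.toSet < Cardinal.lift.{1} μ)
      (hmem : ∀ y, y ∈ x.toSet → HereditarilyLt μ y) : HereditarilyLt μ x

/-- The language of set theory: a single binary (membership) relation. -/
inductive MemRel : ℕ → Type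
  | mem : MemRel 2

def Lmem : FirstOrder.Language := ⟨fun _ => Empty, MemRel⟩

/-- `H(μ)` as a structure in the language of set theory. -/
instance (μ : Cardinal.{0}) : Lmem.Structure {x : ZFSet.{0} // HereditarilyLt μ x} :=
  ⟨fun e _ => e.elim, fun r x => match r with | .mem => (x 0).1 ∈ (x 1).1⟩

-- basic vN lemmas

theorem ZFSet.mem_toSet (a u : ZFSet.{0}) : a ∈ u.toSet ↔ a ∈ u := Iff.rfl

theorem ZFSet.toSet_range {α : Type} [Small.{0} α] (f : α → ZFSet.{0}) :
    (ZFSet.range f).toSet = Set.range f := ZFSet.coe_range f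

theorem vN_def (o : Ordinal.{0}) : vN o = ZFSet.range fun x : o.ToType =>
    vN (@Ordinal.typein o.ToType (· < ·) isWellOrder_lt x) := by
  rw [vN]

theorem vN_mem_of_lt {a b : Ordinal.{0}} (h : a < b) : vN a ∈ vN b := by
  rw [vN_def b, ZFSet.mem_range]
  obtain ⟨x, hx⟩ := @Ordinal.typein_surj b.ToType (· < ·) isWellOrder_lt a
    (by rwa [Ordinal.type_toType])
  exact ⟨x, by simp only [hx]⟩

theorem vN_injective : Function.Injective vN := by
  intro a b h
  rcases lt_trichotomy a b with hlt | heq | hlt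
  · have hm := vN_mem_of_lt hlt
    rw [h] at hm
    exact absurd hm (ZFSet.mem_irrefl _)
  · exact heq
  · have hm := vN_mem_of_lt hlt
    rw [h] at hm
    exact absurd hm (ZFSet.mem_irrefl _)

theorem mem_vN_iff {x : ZFSet.{0}} {b : Ordinal.{0}} : x ∈ vN b ↔ ∃ a < b, x = vN a := by
  constructor
  · intro hx
    rw [vN_def b, ZFSet.mem_range] at hx
    obtain ⟨t, ht⟩ := hx
    exact ⟨_, Ordinal.typein_lt_self t, ht.symm⟩
  · rintro ⟨a, hab, rfl⟩
    exact vN_mem_of_lt hab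

theorem toSet_vN (b : Ordinal.{0}) : (vN b).toSet = Set.range fun x : b.ToType =>
    vN (@Ordinal.typein b.ToType (· < ·) isWellOrder_lt x) := by
  rw [vN_def b, ZFSet.toSet_range]

theorem card_toSet_vN (b : Ordinal.{0}) : #(vN b).toSet = Cardinal.lift.{1} b.card := by
  rw [toSet_vN]
  have hf : Function.Injective fun x : b.ToType =>
      vN (@Ordinal.typein b.ToType (· < ·) isWellOrder_lt x) := by
    intro x y hxy
    exact (@Ordinal.typein_injective b.ToType (· < ·) isWellOrder_lt) (vN_injective hxy)
  have h2 := Cardinal.mk_range_eq_of_injective hf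
  have h3 : Cardinal.mk b.ToType = b.card := by
    rw [← @Ordinal.card_type b.ToType (· < ·) isWellOrder_lt, Ordinal.type_toType]
  rw [h3] at h2
  simpa using h2
-- HereditarilyLt lemmas
theorem HereditarilyLt.card' {μ : Cardinal.{0}} {x : ZFSet.{0}} (h : HereditarilyLt μ x) :
    Cardinal.mk x.toSet < Cardinal.lift.{1} μ := by cases h with | intro x hc hm => exact hc

theorem HereditarilyLt.mem' {μ : Cardinal.{0}} {x y : ZFSet.{0}} (h : HereditarilyLt μ x)
    (hy : y ∈ x) : HereditarilyLt μ y := by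
  cases h with | intro x hc hm => exact hm y ((ZFSet.mem_toSet y x).2 hy)

theorem hlt_of_finite_subset {μ : Cardinal.{0}} (hμ : Cardinal.aleph0 ≤ μ) {x : ZFSet.{0}}
    (hfin : x.toSet.Finite) (hm : ∀ y ∈ x, HereditarilyLt μ y) : HereditarilyLt μ x := by
  refine HereditarilyLt.intro x (lt_of_lt_of_le hfin.lt_aleph0 ?_) ?_
  · exact Cardinal.aleph0_le_lift.2 hμ
  · exact fun y hy => hm y ((ZFSet.mem_toSet y x).1 hy)

theorem hlt_singleton {μ : Cardinal.{0}} (hμ : Cardinal.aleph0 ≤ μ) {a : ZFSet.{0}}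
    (ha : HereditarilyLt μ a) : HereditarilyLt μ ({a} : ZFSet.{0}) := by
  refine hlt_of_finite_subset hμ ?_ ?_
  · have : ({a} : ZFSet.{0}).toSet = {a} := by
      ext y; simp [ZFSet.mem_toSet, ZFSet.mem_singleton]
    rw [this]; exact Set.finite_singleton a
  · intro y hy; rw [ZFSet.mem_singleton] at hy; subst hy; exact ha

theorem hlt_doubleton {μ : Cardinal.{0}} (hμ : Cardinal.aleph0 ≤ μ) {a b : ZFSet.{0}}
    (ha : HereditarilyLt μ a) (hb : HereditarilyLt μ b) :
    HereditarilyLt μ ({a, b} : ZFSet.{0}) := by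
  refine hlt_of_finite_subset hμ ?_ ?_
  · have : ({a, b} : ZFSet.{0}).toSet = {a, b} := by
      ext y; simp [ZFSet.mem_toSet, ZFSet.mem_pair]
    rw [this]; exact (Set.finite_singleton b).insert a
  · intro y hy; rw [ZFSet.mem_pair] at hy
    rcases hy with rfl | rfl
    exacts [ha, hb]

theorem hlt_pair {μ : Cardinal.{0}} (hμ : Cardinal.aleph0 ≤ μ) {a b : ZFSet.{0}}
    (ha : HereditarilyLt μ a) (hb : HereditarilyLt μ b) :
    HereditarilyLt μ (ZFSet.pair a b) := by
  have : ZFSet.pair a b = {{a}, {a, b}} := rfl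
  rw [this]
  exact hlt_doubleton hμ (hlt_singleton hμ ha) (hlt_doubleton hμ ha hb)

theorem hlt_vN {μ : Cardinal.{0}} {α : Ordinal.{0}} (h : α < μ.ord) :
    HereditarilyLt μ (vN α) := by
  induction α using Ordinal.induction with
  | h α ih =>
    refine HereditarilyLt.intro _ ?_ ?_
    · rw [card_toSet_vN]
      exact Cardinal.lift_lt.2 (Cardinal.lt_ord.1 h)
    · intro y hy
      rw [ZFSet.mem_toSet, mem_vN_iff] at hy
      obtain ⟨β, hβ, rfl⟩ := hy
      exact ih β hβ (hβ.trans h)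

theorem mem_hty_vN {μ : Cardinal.{0}} {α : Ordinal.{0}} (h : α < μ.ord) :
    ∃ hh : HereditarilyLt μ (vN α), True := ⟨hlt_vN h, trivial⟩
-- Formulas
open FirstOrder FirstOrder.Language FirstOrder.Language.BoundedFormula

abbrev Hty (μ : Cardinal.{0}) := {x : ZFSet.{0} // HereditarilyLt μ x}

def lift1 {α : Type} {n : ℕ} (v : α ⊕ Fin n) : α ⊕ Fin (n + 1) :=
  Sum.map id Fin.castSucc v

def tv {α : Type} (n : ℕ) : α ⊕ Fin (n + 1) := Sum.inr (Fin.last n)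

def memV {α : Type} {n : ℕ} (x y : α ⊕ Fin n) : Lmem.BoundedFormula α n :=
  Relations.boundedFormula₂ (L := Lmem) MemRel.mem (Term.var x) (Term.var y)

def eqV {α : Type} {n : ℕ} (x y : α ⊕ Fin n) : Lmem.BoundedFormula α n :=
  Term.bdEqual (Term.var x) (Term.var y)

def sgF {α : Type} {n : ℕ} (z a : α ⊕ Fin n) : Lmem.BoundedFormula α n :=
  BoundedFormula.all ((memV (tv n) (lift1 z)).iff (eqV (tv n) (lift1 a)))

def upF {α : Type} {n : ℕ} (z a b : α ⊕ Fin n) : Lmem.BoundedFormula α n :=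
  BoundedFormula.all ((memV (tv n) (lift1 z)).iff
    ((eqV (tv n) (lift1 a)) ⊔ (eqV (tv n) (lift1 b))))

def ipF {α : Type} {n : ℕ} (p a b : α ⊕ Fin n) : Lmem.BoundedFormula α n :=
  BoundedFormula.all ((memV (tv n) (lift1 p)).iff
    ((sgF (tv n) (lift1 a)) ⊔ (upF (tv n) (lift1 a) (lift1 b))))

def pmF {α : Type} {n : ℕ} (f a b : α ⊕ Fin n) : Lmem.BoundedFormula α n :=
  BoundedFormula.ex ((memV (tv n) (lift1 f)) ⊓ (ipF (tv n) (lift1 a) (lift1 b)))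

def bij1F {α : Type} {n : ℕ} (d f c : α ⊕ Fin n) : Lmem.BoundedFormula α n :=
  BoundedFormula.all ((memV (tv n) (lift1 c)).imp
    (BoundedFormula.ex ((memV (tv (n+1)) (lift1 (lift1 d))) ⊓
      (pmF (lift1 (lift1 f)) (tv (n+1)) (lift1 (tv n))))))

def bij2F {α : Type} {n : ℕ} (f : α ⊕ Fin n) : Lmem.BoundedFormula α n :=
  BoundedFormula.all (BoundedFormula.all (BoundedFormula.all
    ((pmF (lift1 (lift1 (lift1 f))) (lift1 (lift1 (tv n))) (lift1 (tv (n+1)))).imp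
      ((pmF (lift1 (lift1 (lift1 f))) (lift1 (lift1 (tv n))) (tv (n+2))).imp
        (eqV (lift1 (tv (n+1))) (tv (n+2)))))))

def bijF {α : Type} {n : ℕ} (d f c : α ⊕ Fin n) : Lmem.BoundedFormula α n :=
  (bij1F d f c) ⊓ (bij2F f)

def minF {α : Type} {n : ℕ} (d c : α ⊕ Fin n) : Lmem.BoundedFormula α n :=
  BoundedFormula.all ((memV (tv n) (lift1 d)).imp
    (BoundedFormula.all ((bijF (lift1 (tv n)) (tv (n+1)) (lift1 (lift1 c))).not)))

def coreF : Lmem.BoundedFormula (Fin 1) 2 :=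
  (memV (Sum.inr 0) (Sum.inl 0)) ⊓
    ((bijF (Sum.inr 0) (Sum.inr 1) (Sum.inl 0)) ⊓ (minF (Sum.inr 0) (Sum.inl 0)))

def thetaCore : Lmem.BoundedFormula (Fin 3) 1 :=
  (memV (Sum.inr 0) (Sum.inl 0)) ⊓ (pmF (Sum.inl 1) (Sum.inr 0) (Sum.inl 2))

-- realize lemmas
section Realize

variable {μ : Cardinal.{0}} {α : Type} {n : ℕ} {v : α → Hty μ} {xs : Fin n → Hty μ}

@[simp] theorem elim_snoc_lift1 (v : α → Hty μ) (xs : Fin n → Hty μ) (w : Hty μ) (z : α ⊕ Fin n) :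
    Sum.elim v (Fin.snoc xs w) (lift1 z) = Sum.elim v xs z := by
  cases z with
  | inl a => rfl
  | inr j => simp [lift1]

@[simp] theorem elim_snoc_tv (v : α → Hty μ) (xs : Fin n → Hty μ) (w : Hty μ) :
    Sum.elim v (Fin.snoc xs w) (tv n) = w := by simp [tv]

theorem realize_memV (x y : α ⊕ Fin n) :
    (memV x y).Realize v xs ↔ (Sum.elim v xs x).1 ∈ (Sum.elim v xs y).1 := by
  rw [memV]
  exact Iff.rfl

theorem realize_eqV (x y : α ⊕ Fin n) :
    (eqV x y).Realize v xs ↔ Sum.elim v xs x = Sum.elim v xs y := by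
  rw [eqV, BoundedFormula.realize_bdEqual]
  exact Iff.rfl

theorem realize_sgF (z a : α ⊕ Fin n) :
    (sgF z a).Realize v xs ↔ (Sum.elim v xs z).1 = {(Sum.elim v xs a).1} := by
  rw [sgF, BoundedFormula.realize_all]
  simp only [BoundedFormula.realize_iff, realize_memV, realize_eqV, elim_snoc_lift1, elim_snoc_tv]
  constructor
  · intro h
    apply ZFSet.ext
    intro y
    rw [ZFSet.mem_singleton]
    constructor
    · intro hy
      have hyH : HereditarilyLt μ y := (Sum.elim v xs z).2.mem' hy
      have := (h ⟨y, hyH⟩).1 hy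
      exact congrArg Subtype.val this
    · intro hy
      subst hy
      exact (h (Sum.elim v xs a)).2 rfl
  · intro h w
    rw [h, ZFSet.mem_singleton]
    exact ⟨fun hw => Subtype.ext hw, fun hw => congrArg Subtype.val hw⟩

theorem realize_upF (z a b : α ⊕ Fin n) :
    (upF z a b).Realize v xs ↔
      (Sum.elim v xs z).1 = {(Sum.elim v xs a).1, (Sum.elim v xs b).1} := by
  rw [upF, BoundedFormula.realize_all]
  simp only [BoundedFormula.realize_iff, BoundedFormula.realize_sup, realize_memV, realize_eqV,
    elim_snoc_lift1, elim_snoc_tv]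
  constructor
  · intro h
    apply ZFSet.ext
    intro y
    rw [ZFSet.mem_pair]
    constructor
    · intro hy
      have hyH : HereditarilyLt μ y := (Sum.elim v xs z).2.mem' hy
      rcases (h ⟨y, hyH⟩).1 hy with h1 | h1
      · exact Or.inl (congrArg Subtype.val h1)
      · exact Or.inr (congrArg Subtype.val h1)
    · rintro (rfl | rfl)
      · exact (h (Sum.elim v xs a)).2 (Or.inl rfl)
      · exact (h (Sum.elim v xs b)).2 (Or.inr rfl)
  · intro h w
    rw [h, ZFSet.mem_pair]
    constructor
    · rintro (hw | hw)
      · exact Or.inl (Subtype.ext hw)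
      · exact Or.inr (Subtype.ext hw)
    · rintro (rfl | rfl)
      · exact Or.inl rfl
      · exact Or.inr rfl

theorem realize_ipF (hμ : Cardinal.aleph0 ≤ μ) (p a b : α ⊕ Fin n) :
    (ipF p a b).Realize v xs ↔
      (Sum.elim v xs p).1 =
        ZFSet.pair (Sum.elim v xs a).1 (Sum.elim v xs b).1 := by
  rw [ipF, BoundedFormula.realize_all]
  simp only [BoundedFormula.realize_iff, BoundedFormula.realize_sup, realize_sgF, realize_upF,
    realize_memV, elim_snoc_lift1, elim_snoc_tv]
  have hpair : ZFSet.pair (Sum.elim v xs a).1 (Sum.elim v xs b).1 =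
      {{(Sum.elim v xs a).1}, {(Sum.elim v xs a).1, (Sum.elim v xs b).1}} := rfl
  constructor
  · intro h
    rw [hpair]
    apply ZFSet.ext
    intro y
    rw [ZFSet.mem_pair]
    constructor
    · intro hy
      have hyH : HereditarilyLt μ y := (Sum.elim v xs p).2.mem' hy
      exact (h ⟨y, hyH⟩).1 hy
    · rintro (rfl | rfl)
      · exact (h ⟨_, hlt_singleton hμ (Sum.elim v xs a).2⟩).2 (Or.inl rfl)
      · exact (h ⟨_, hlt_doubleton hμ (Sum.elim v xs a).2 (Sum.elim v xs b).2⟩).2 (Or.inr rfl)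
  · intro h w
    rw [h, hpair, ZFSet.mem_pair]

theorem realize_pmF (hμ : Cardinal.aleph0 ≤ μ) (f a b : α ⊕ Fin n) :
    (pmF f a b).Realize v xs ↔
      ZFSet.pair (Sum.elim v xs a).1 (Sum.elim v xs b).1 ∈ (Sum.elim v xs f).1 := by
  rw [pmF, BoundedFormula.realize_ex]
  simp only [BoundedFormula.realize_inf, realize_memV, realize_ipF hμ, elim_snoc_lift1,
    elim_snoc_tv]
  constructor
  · rintro ⟨w, hw1, hw2⟩
    rw [← hw2]
    exact hw1
  · intro h
    refine ⟨⟨_, (Sum.elim v xs f).2.mem' h⟩, h, rfl⟩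

end Realize
-- Bij semantics
def BijSem (μ : Cardinal.{0}) (f d c : ZFSet.{0}) : Prop :=
  (∀ y ∈ c.toSet, ∃ x ∈ d.toSet, ZFSet.pair x y ∈ f) ∧
  (∀ x y y' : Hty μ, ZFSet.pair x.1 y.1 ∈ f → ZFSet.pair x.1 y'.1 ∈ f → y.1 = y'.1)

section Realize2

variable {μ : Cardinal.{0}} {α : Type} {n : ℕ} {v : α → Hty μ} {xs : Fin n → Hty μ}

theorem realize_bij1F (hμ : Cardinal.aleph0 ≤ μ) (d f c : α ⊕ Fin n) :
    (bij1F d f c).Realize v xs ↔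
      ∀ y ∈ (Sum.elim v xs c).1.toSet, ∃ x ∈ (Sum.elim v xs d).1.toSet,
        ZFSet.pair x y ∈ (Sum.elim v xs f).1 := by
  rw [bij1F, BoundedFormula.realize_all]
  simp only [BoundedFormula.realize_imp, BoundedFormula.realize_ex, BoundedFormula.realize_inf,
    realize_memV, realize_pmF hμ, elim_snoc_lift1, elim_snoc_tv]
  constructor
  · intro h y hy
    rw [ZFSet.mem_toSet] at hy
    have hyH : HereditarilyLt μ y := (Sum.elim v xs c).2.mem' hy
    obtain ⟨u, hu1, hu2⟩ := h ⟨y, hyH⟩ hy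
    exact ⟨u.1, (ZFSet.mem_toSet _ _).2 hu1, hu2⟩
  · intro h w hw
    obtain ⟨x, hx1, hx2⟩ := h w.1 ((ZFSet.mem_toSet _ _).2 hw)
    rw [ZFSet.mem_toSet] at hx1
    exact ⟨⟨x, (Sum.elim v xs d).2.mem' hx1⟩, hx1, hx2⟩

theorem realize_bij2F (hμ : Cardinal.aleph0 ≤ μ) (f : α ⊕ Fin n) :
    (bij2F f).Realize v xs ↔
      ∀ x y y' : Hty μ, ZFSet.pair x.1 y.1 ∈ (Sum.elim v xs f).1 →
        ZFSet.pair x.1 y'.1 ∈ (Sum.elim v xs f).1 → y.1 = y'.1 := by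
  rw [bij2F, BoundedFormula.realize_all]
  simp only [BoundedFormula.realize_all, BoundedFormula.realize_imp, realize_pmF hμ, realize_eqV,
    elim_snoc_lift1, elim_snoc_tv]
  constructor
  · intro h x y y' h1 h2
    exact congrArg Subtype.val (h x y y' h1 h2)
  · intro h x y y' h1 h2
    exact Subtype.ext (h x y y' h1 h2)

theorem realize_bijF (hμ : Cardinal.aleph0 ≤ μ) (d f c : α ⊕ Fin n) :
    (bijF d f c).Realize v xs ↔
      BijSem μ (Sum.elim v xs f).1 (Sum.elim v xs d).1 (Sum.elim v xs c).1 := by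
  rw [bijF, BoundedFormula.realize_inf, realize_bij1F hμ, realize_bij2F hμ]
  exact Iff.rfl

theorem realize_minF (hμ : Cardinal.aleph0 ≤ μ) (d c : α ⊕ Fin n) :
    (minF d c).Realize v xs ↔
      ∀ x : Hty μ, x.1 ∈ (Sum.elim v xs d).1 → ∀ f' : Hty μ,
        ¬ BijSem μ f'.1 x.1 (Sum.elim v xs c).1 := by
  rw [minF, BoundedFormula.realize_all]
  simp only [BoundedFormula.realize_imp, BoundedFormula.realize_all, BoundedFormula.realize_not,
    realize_memV, realize_bijF hμ, elim_snoc_lift1, elim_snoc_tv]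

/-- Semantic content of `coreF`. -/
def CoreSem (μ : Cardinal.{0}) (d f c : ZFSet.{0}) : Prop :=
  d ∈ c ∧ BijSem μ f d c ∧
    ∀ x : Hty μ, x.1 ∈ d → ∀ f' : Hty μ, ¬ BijSem μ f'.1 x.1 c

theorem realize_coreF (hμ : Cardinal.aleph0 ≤ μ) {v : Fin 1 → Hty μ} {xs : Fin 2 → Hty μ} :
    coreF.Realize v xs ↔ CoreSem μ (xs 0).1 (xs 1).1 (v 0).1 := by
  rw [coreF, BoundedFormula.realize_inf, BoundedFormula.realize_inf, realize_memV,
    realize_bijF hμ, realize_minF hμ]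
  exact Iff.rfl

theorem realize_thetaCore (hμ : Cardinal.aleph0 ≤ μ) {v : Fin 3 → Hty μ} {xs : Fin 1 → Hty μ} :
    thetaCore.Realize v xs ↔
      (xs 0).1 ∈ (v 0).1 ∧ ZFSet.pair (xs 0).1 (v 2).1 ∈ (v 1).1 := by
  rw [thetaCore, BoundedFormula.realize_inf, realize_memV, realize_pmF hμ]
  exact Iff.rfl

end Realize2
-- construction of the coded bijection
noncomputable def fCode (δ γ : Ordinal.{0}) (E : δ.ToType ≃ γ.ToType) : ZFSet.{0} :=
  ZFSet.range fun x : δ.ToType =>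
    ZFSet.pair (vN (@Ordinal.typein δ.ToType (· < ·) isWellOrder_lt x))
      (vN (@Ordinal.typein γ.ToType (· < ·) isWellOrder_lt (E x)))

theorem hlt_of_pair_mem {μ : Cardinal.{0}} {f a b : ZFSet.{0}} (hf : HereditarilyLt μ f)
    (h : ZFSet.pair a b ∈ f) : HereditarilyLt μ a ∧ HereditarilyLt μ b := by
  have hp : HereditarilyLt μ (ZFSet.pair a b) := hf.mem' h
  have hab : ({a, b} : ZFSet.{0}) ∈ ZFSet.pair a b := by
    have : ZFSet.pair a b = {{a}, {a, b}} := rfl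
    rw [this, ZFSet.mem_pair]; exact Or.inr rfl
  have hd : HereditarilyLt μ ({a, b} : ZFSet.{0}) := hp.mem' hab
  constructor
  · exact hd.mem' (by rw [ZFSet.mem_pair]; exact Or.inl rfl)
  · exact hd.mem' (by rw [ZFSet.mem_pair]; exact Or.inr rfl)

theorem hlt_fCode {μ : Cardinal.{0}} (hμ : Cardinal.aleph0 ≤ μ) {δ γ : Ordinal.{0}}
    (hδ : δ < μ.ord) (hγ : γ < μ.ord) (E : δ.ToType ≃ γ.ToType) :
    HereditarilyLt μ (fCode δ γ E) := by
  refine HereditarilyLt.intro _ ?_ ?_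
  · rw [fCode, ZFSet.toSet_range]
    have h0 : #(Set.range fun x : δ.ToType =>
        ZFSet.pair (vN (@Ordinal.typein δ.ToType (· < ·) isWellOrder_lt x))
          (vN (@Ordinal.typein γ.ToType (· < ·) isWellOrder_lt (E x)))) ≤
        Cardinal.lift.{1} (Cardinal.mk δ.ToType) := by
      simpa using Cardinal.mk_range_le_lift (f := fun x : δ.ToType =>
        ZFSet.pair (vN (@Ordinal.typein δ.ToType (· < ·) isWellOrder_lt x))
          (vN (@Ordinal.typein γ.ToType (· < ·) isWellOrder_lt (E x))))
    refine lt_of_le_of_lt h0 ?_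
    have h1 : Cardinal.mk δ.ToType = δ.card := by
      rw [← @Ordinal.card_type δ.ToType (· < ·) isWellOrder_lt, Ordinal.type_toType]
    rw [h1]
    exact Cardinal.lift_lt.2 (Cardinal.lt_ord.1 hδ)
  · intro y hy
    rw [fCode, ZFSet.toSet_range] at hy
    obtain ⟨x, rfl⟩ := hy
    exact hlt_pair hμ (hlt_vN ((Ordinal.typein_lt_self x).trans hδ))
      (hlt_vN ((Ordinal.typein_lt_self (E x)).trans hγ))

theorem bijSem_fCode (μ : Cardinal.{0}) (δ γ : Ordinal.{0}) (E : δ.ToType ≃ γ.ToType) :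
    BijSem μ (fCode δ γ E) (vN δ) (vN γ) := by
  constructor
  · intro y hy
    rw [ZFSet.mem_toSet, mem_vN_iff] at hy
    obtain ⟨a, ha, rfl⟩ := hy
    obtain ⟨t, ht⟩ := @Ordinal.typein_surj γ.ToType (· < ·) isWellOrder_lt a
      (by rwa [Ordinal.type_toType])
    refine ⟨vN (@Ordinal.typein δ.ToType (· < ·) isWellOrder_lt (E.symm t)), ?_, ?_⟩
    · rw [ZFSet.mem_toSet]
      exact vN_mem_of_lt (Ordinal.typein_lt_self _)
    · have : ZFSet.pair (vN (@Ordinal.typein δ.ToType (· < ·) isWellOrder_lt (E.symm t)))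
          (vN (@Ordinal.typein γ.ToType (· < ·) isWellOrder_lt (E (E.symm t)))) ∈ fCode δ γ E := by
        rw [fCode, ZFSet.mem_range]
        exact ⟨E.symm t, rfl⟩
      rwa [E.apply_symm_apply, ht] at this
  · intro x y y' h1 h2
    rw [fCode, ZFSet.mem_range] at h1 h2
    obtain ⟨u, hu⟩ := h1
    obtain ⟨u', hu'⟩ := h2
    obtain ⟨hx1, hy1⟩ := ZFSet.pair_injective hu
    obtain ⟨hx2, hy2⟩ := ZFSet.pair_injective hu'
    have huu : u = u' := by
      have := vN_injective (hx1.trans hx2.symm)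
      exact (@Ordinal.typein_injective δ.ToType (· < ·) isWellOrder_lt) this
    rw [← hy1, ← hy2, huu]

theorem card_le_of_bijSem {μ : Cardinal.{0}} {f' : ZFSet.{0}} (hf' : HereditarilyLt μ f')
    {δ γ : Ordinal.{0}} (h : BijSem μ f' (vN δ) (vN γ)) : γ.card ≤ δ.card := by
  have key : ∀ t : γ.ToType, ∃ x ∈ (vN δ).toSet,
      ZFSet.pair x (vN (@Ordinal.typein γ.ToType (· < ·) isWellOrder_lt t)) ∈ f' := by
    intro t
    exact h.1 _ ((ZFSet.mem_toSet _ _).2 (vN_mem_of_lt (Ordinal.typein_lt_self t)))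
  choose F hF1 hF2 using key
  have hFinj : Function.Injective (fun t => (⟨F t, hF1 t⟩ : (vN δ).toSet)) := by
    intro t t' htt
    have hxeq : F t = F t' := congrArg Subtype.val htt
    have h1 := hF2 t
    have h2 := hF2 t'
    rw [hxeq] at h1
    obtain ⟨hxH, hyH⟩ := hlt_of_pair_mem hf' h1
    obtain ⟨_, hyH'⟩ := hlt_of_pair_mem hf' h2
    have := h.2 ⟨F t', hxH⟩ ⟨_, hyH⟩ ⟨_, hyH'⟩ h1 h2
    have := vN_injective this
    exact (@Ordinal.typein_injective γ.ToType (· < ·) isWellOrder_lt) this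
  have hle := Cardinal.lift_mk_le_lift_mk_of_injective hFinj
  have h1 : Cardinal.mk γ.ToType = γ.card := by
    rw [← @Ordinal.card_type γ.ToType (· < ·) isWellOrder_lt, Ordinal.type_toType]
  rw [h1, card_toSet_vN] at hle
  simp only [Cardinal.lift_lift, Cardinal.lift_id] at hle
  exact Cardinal.lift_le.1 hle
-- bundled formulas and transfer lemmas
def PhiF : Lmem.Formula (Fin 1) := coreF.exs

def relab1 : Fin 1 ⊕ Fin 2 → Fin 3 := Sum.elim (fun _ => (0 : Fin 3)) (fun j => j.succ)

def PsiF : Lmem.Formula (Fin 3) :=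
  coreF.toFormula.relabel relab1

def ThetaF : Lmem.Formula (Fin 3) := thetaCore.exs

def relab2 : Fin 3 ⊕ Fin 1 → Fin 4 := Sum.elim (fun i => i.castSucc) (fun _ => (3 : Fin 4))

def XiF : Lmem.Formula (Fin 4) :=
  thetaCore.toFormula.relabel relab2

section Generic

variable {N : Type 1} [Lmem.Structure N]

theorem realize_PhiF {w : Fin 1 → N} :
    PhiF.Realize w ↔ ∃ xs : Fin 2 → N, coreF.Realize w xs := by
  rw [PhiF]
  exact BoundedFormula.realize_exs

theorem realize_PsiF {w : Fin 3 → N} :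
    PsiF.Realize w ↔ coreF.Realize ![w 0] ![w 1, w 2] := by
  rw [PsiF, Formula.realize_relabel, BoundedFormula.realize_toFormula]
  have h1 : (w ∘ relab1) ∘ Sum.inl = ![w 0] := by
    funext i; fin_cases i <;> rfl
  have h2 : (w ∘ relab1) ∘ Sum.inr = ![w 1, w 2] := by
    funext i; fin_cases i <;> rfl
  rw [h1, h2]

theorem realize_ThetaF {w : Fin 3 → N} :
    ThetaF.Realize w ↔ ∃ xs : Fin 1 → N, thetaCore.Realize w xs := by
  rw [ThetaF]
  exact BoundedFormula.realize_exs

theorem realize_XiF {w : Fin 4 → N} :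
    XiF.Realize w ↔ thetaCore.Realize ![w 0, w 1, w 2] ![w 3] := by
  rw [XiF, Formula.realize_relabel, BoundedFormula.realize_toFormula]
  have h1 : (w ∘ relab2) ∘ Sum.inl = ![w 0, w 1, w 2] := by
    funext i; fin_cases i <;> rfl
  have h2 : (w ∘ relab2) ∘ Sum.inr = ![w 3] := by
    funext i; fin_cases i <;> rfl
  rw [h1, h2]

end Generic
theorem mk_toType' (o : Ordinal.{0}) : Cardinal.mk o.ToType = o.card := by
  rw [← @Ordinal.card_type o.ToType (· < ·) isWellOrder_lt, Ordinal.type_toType]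

theorem elem_transfer {μ : Cardinal.{0}} (M : Lmem.ElementarySubstructure (Hty μ)) {n : ℕ}
    (φ : Lmem.Formula (Fin n)) (x : Fin n → M) (w : Fin n → Hty μ)
    (hw : ∀ i, ((x i : M) : Hty μ) = w i) : φ.Realize w ↔ φ.Realize x := by
  have h : ((↑) : M → Hty μ) ∘ x = w := funext hw
  rw [← h]
  exact M.isElementary φ x

theorem segment_le {μ κ : Cardinal.{0}} (hmuinf : Cardinal.aleph0 ≤ μ)
    (hμbig : Order.succ κ < μ)
    (M : Lmem.ElementarySubstructure (Hty μ))
    {γ : Ordinal.{0}} (hγlt : γ < (Order.succ κ).ord) (hγκ : κ.ord < γ)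
    (hγM : ∃ h : HereditarilyLt μ (vN γ), (⟨vN γ, h⟩ : Hty μ) ∈ M) :
    #{α : Ordinal.{0} | α < γ ∧ ∃ h : HereditarilyLt μ (vN α), (⟨vN α, h⟩ : Hty μ) ∈ M} ≤
      #{α : Ordinal.{0} | α < κ.ord ∧
        ∃ h : HereditarilyLt μ (vN α), (⟨vN α, h⟩ : Hty μ) ∈ M} := by
  have hκμ : κ < μ := lt_trans (Order.lt_succ κ) hμbig
  have hκordμ : κ.ord < μ.ord := Cardinal.ord_lt_ord.2 hκμ
  have hsuccμ : (Order.succ κ).ord < μ.ord := Cardinal.ord_lt_ord.2 hμbig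
  have hγμ : γ < μ.ord := hγlt.trans hsuccμ
  have hγcard : γ.card = κ := by
    apply le_antisymm
    · exact Order.lt_succ_iff.1 (Cardinal.lt_ord.1 hγlt)
    · have := Ordinal.card_le_card hγκ.le
      rwa [Cardinal.card_ord] at this
  obtain ⟨E⟩ := Cardinal.eq.1 (show Cardinal.mk κ.ord.ToType = Cardinal.mk γ.ToType by
    rw [mk_toType', mk_toType', Cardinal.card_ord, hγcard])
  set f₀ : ZFSet.{0} := fCode κ.ord γ E with hf₀def
  have hf₀ : HereditarilyLt μ f₀ := hlt_fCode hmuinf hκordμ hγμ E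
  have hbij₀ : BijSem μ f₀ (vN κ.ord) (vN γ) := bijSem_fCode μ κ.ord γ E
  obtain ⟨hγh, hγMm⟩ := hγM
  set gHat : Hty μ := ⟨vN γ, hγh⟩ with hgHat
  have core0 : CoreSem μ (vN κ.ord) f₀ (vN γ) := by
    refine ⟨vN_mem_of_lt hγκ, hbij₀, ?_⟩
    intro x hx f' hB
    obtain ⟨β, hβκ, hxval⟩ := mem_vN_iff.1 hx
    rw [hxval] at hB
    have h1 : γ.card ≤ β.card := card_le_of_bijSem f'.2 hB
    have h2 : β.card < κ := Cardinal.lt_ord.1 hβκ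
    rw [hγcard] at h1
    exact absurd (lt_of_le_of_lt h1 h2) (lt_irrefl κ)
  have hPhiH : PhiF.Realize ![gHat] := by
    refine realize_PhiF.2 ⟨![⟨vN κ.ord, hlt_vN hκordμ⟩, ⟨f₀, hf₀⟩], ?_⟩
    refine (realize_coreF hmuinf).2 ?_
    simp only [Matrix.cons_val_zero, Matrix.cons_val_one, Matrix.head_cons]
    exact core0
  set g1 : Fin 1 → M := ![⟨gHat, hγMm⟩] with hg1
  have hPhiM : PhiF.Realize g1 :=
    (elem_transfer M PhiF g1 ![gHat] (by intro i; fin_cases i; rfl)).1 hPhiH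
  obtain ⟨df, hdf⟩ := realize_PhiF.1 hPhiM
  set g3 : Fin 3 → M := ![g1 0, df 0, df 1] with hg3
  have hPsiM : PsiF.Realize g3 := by
    refine realize_PsiF.2 ?_
    have e1 : (![g3 0] : Fin 1 → M) = g1 := by funext i; fin_cases i; rfl
    have e2 : (![g3 1, g3 2] : Fin 2 → M) = df := by funext i; fin_cases i <;> rfl
    rw [e1, e2]; exact hdf
  have hPsiH : PsiF.Realize (((↑) : M → Hty μ) ∘ g3) := (M.isElementary PsiF g3).2 hPsiM
  have hcoreH := realize_PsiF.1 hPsiH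
  set d : Hty μ := ((df 0 : M) : Hty μ) with hd
  set f : Hty μ := ((df 1 : M) : Hty μ) with hf
  have hcore : CoreSem μ d.1 f.1 (vN γ) := by
    have e0 : ((((↑) : M → Hty μ) ∘ g3) 0) = gHat := rfl
    have e1 : (![(((↑) : M → Hty μ) ∘ g3) 0] : Fin 1 → Hty μ) 0 = gHat := by
      simp only [Matrix.cons_val_zero]; exact e0
    have h2 := (realize_coreF hmuinf).1 hcoreH
    simp only [Matrix.cons_val_zero, Matrix.cons_val_one, Matrix.head_cons,
      Function.comp_apply] at h2
    convert h2 using 2 <;> rfl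
  obtain ⟨δ, hδγ, hdval⟩ := mem_vN_iff.1 hcore.1
  have hδκ : δ ≤ κ.ord := by
    by_contra hcon
    push_neg at hcon
    refine hcore.2.2 ⟨vN κ.ord, hlt_vN hκordμ⟩ ?_ ⟨f₀, hf₀⟩ hbij₀
    rw [hdval]
    exact vN_mem_of_lt hcon
  -- main extraction for each α
  have main : ∀ α : Ordinal.{0}, α < γ →
      (∃ h : HereditarilyLt μ (vN α), (⟨vN α, h⟩ : Hty μ) ∈ M) →
      ∃ β : Ordinal.{0}, β < κ.ord ∧
        (∃ h : HereditarilyLt μ (vN β), (⟨vN β, h⟩ : Hty μ) ∈ M) ∧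
        ZFSet.pair (vN β) (vN α) ∈ f.1 := by
    intro α hαγ hαM
    have hαμ : α < μ.ord := hαγ.trans hγμ
    set aHat : Hty μ := ⟨vN α, hlt_vN hαμ⟩ with haHat
    have hαMm : aHat ∈ M := by
      obtain ⟨h, hm⟩ := hαM
      have : aHat = ⟨vN α, h⟩ := Subtype.ext rfl
      rw [this]; exact hm
    obtain ⟨x₀, hx₀d, hx₀f⟩ := hcore.2.1.1 (vN α)
      (by rw [ZFSet.mem_toSet]; rw [hgHat] at *; exact vN_mem_of_lt hαγ)
    rw [ZFSet.mem_toSet] at hx₀d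
    have hThetaH : ThetaF.Realize ![d, f, aHat] := by
      refine realize_ThetaF.2 ⟨![⟨x₀, d.2.mem' hx₀d⟩], ?_⟩
      refine (realize_thetaCore hmuinf).2 ?_
      simp only [Matrix.cons_val_zero, Matrix.cons_val_one, Matrix.head_cons]
      exact ⟨hx₀d, hx₀f⟩
    set g3' : Fin 3 → M := ![df 0, df 1, ⟨aHat, hαMm⟩] with hg3'
    have hThetaM : ThetaF.Realize g3' :=
      (elem_transfer M ThetaF g3' ![d, f, aHat] (by intro i; fin_cases i <;> rfl)).1 hThetaH
    obtain ⟨xw, hxw⟩ := realize_ThetaF.1 hThetaM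
    set g4 : Fin 4 → M := ![g3' 0, g3' 1, g3' 2, xw 0] with hg4
    have hXiM : XiF.Realize g4 := by
      refine realize_XiF.2 ?_
      have e1 : (![g4 0, g4 1, g4 2] : Fin 3 → M) = g3' := by funext i; fin_cases i <;> rfl
      have e2 : (![g4 3] : Fin 1 → M) = xw := by funext i; fin_cases i; rfl
      rw [e1, e2]; exact hxw
    set x : Hty μ := ((xw 0 : M) : Hty μ) with hx
    have hXiH : XiF.Realize ![d, f, aHat, x] :=
      (elem_transfer M XiF g4 ![d, f, aHat, x] (by intro i; fin_cases i <;> rfl)).2 hXiM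
    have hth := realize_XiF.1 hXiH
    have hth2 := (realize_thetaCore hmuinf).1 (by
      have e3 : (![(![d, f, aHat, x] : Fin 4 → Hty μ) 0, ![d, f, aHat, x] 1,
          ![d, f, aHat, x] 2] : Fin 3 → Hty μ) = ![d, f, aHat] := by
        funext i; fin_cases i <;> rfl
      rw [e3] at hth
      exact hth)
    simp only [Matrix.cons_val_zero, Matrix.cons_val_one, Matrix.head_cons] at hth2
    obtain ⟨hxd, hxf⟩ := hth2
    rw [hdval] at hxd
    obtain ⟨β, hβδ, hxval⟩ := mem_vN_iff.1 hxd
    refine ⟨β, lt_of_lt_of_le hβδ hδκ, ?_, ?_⟩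
    · refine ⟨hlt_vN (lt_trans (lt_of_lt_of_le hβδ hδκ) hκordμ), ?_⟩
      have : (⟨vN β, hlt_vN (lt_trans (lt_of_lt_of_le hβδ hδκ) hκordμ)⟩ : Hty μ) = x :=
        Subtype.ext hxval.symm
      rw [this]
      exact (xw 0).2
    · rw [← hxval]
      exact hxf
  -- build the injection
  choose β hβ1 hβ2 hβ3 using main
  refine Cardinal.mk_le_of_injective (f := fun a : {α : Ordinal.{0} | α < γ ∧
      ∃ h : HereditarilyLt μ (vN α), (⟨vN α, h⟩ : Hty μ) ∈ M} =>
      (⟨β a.1 a.2.1 a.2.2, hβ1 a.1 a.2.1 a.2.2, hβ2 a.1 a.2.1 a.2.2⟩ :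
        {α : Ordinal.{0} | α < κ.ord ∧
          ∃ h : HereditarilyLt μ (vN α), (⟨vN α, h⟩ : Hty μ) ∈ M})) ?_
  intro a1 a2 heq
  have hβeq : β a1.1 a1.2.1 a1.2.2 = β a2.1 a2.2.1 a2.2.2 := congrArg Subtype.val heq
  have h1 := hβ3 a1.1 a1.2.1 a1.2.2
  have h2 := hβ3 a2.1 a2.2.1 a2.2.2
  rw [hβeq] at h1
  have hμ1 : a1.1 < μ.ord := a1.2.1.trans hγμ
  have hμ2 : a2.1 < μ.ord := a2.2.1.trans hγμ
  have hβμ : β a2.1 a2.2.1 a2.2.2 < μ.ord :=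
    lt_trans (hβ1 a2.1 a2.2.1 a2.2.2) hκordμ
  have := hcore.2.1.2 ⟨vN (β a2.1 a2.2.1 a2.2.2), hlt_vN hβμ⟩
    ⟨vN a1.1, hlt_vN hμ1⟩ ⟨vN a2.1, hlt_vN hμ2⟩ h1 h2
  exact Subtype.ext (vN_injective this)

/-- If `M ≺ H(μ)` (for `μ` regular, large enough) with `κ⁺ ∈ M`, `|M ∩ κ| < ℵ_n` and
`|M ∩ κ⁺| = ℵ_n`, where `κ` is singular, then `otp (M ∩ κ⁺) = ℵ_n`. -/
theorem otp_inter_eq_aleph (μ κ : Cardinal.{0}) (n : ℕ) (hn : 0 < n)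
    (hκinf : Cardinal.aleph0 ≤ κ) (hκsing : ¬κ.IsRegular)
    (hμreg : μ.IsRegular) (hμbig : Order.succ κ < μ)
    (M : Lmem.ElementarySubstructure {x : ZFSet.{0} // HereditarilyLt μ x})
    (hsucc : ∃ h : HereditarilyLt μ (vN (Order.succ κ).ord),
      (⟨vN (Order.succ κ).ord, h⟩ : {x // HereditarilyLt μ x}) ∈ M)
    (hsmall : #{α : Ordinal.{0} | α < κ.ord ∧
        ∃ h : HereditarilyLt μ (vN α), (⟨vN α, h⟩ : {x // HereditarilyLt μ x}) ∈ M} <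
      Cardinal.lift.{1,0} (Cardinal.aleph n))
    (hsize : #{α : Ordinal.{0} | α < (Order.succ κ).ord ∧
        ∃ h : HereditarilyLt μ (vN α), (⟨vN α, h⟩ : {x // HereditarilyLt μ x}) ∈ M} =
      Cardinal.lift.{1,0} (Cardinal.aleph n)) :
    otp {α : Ordinal.{0} | α < (Order.succ κ).ord ∧
        ∃ h : HereditarilyLt μ (vN α), (⟨vN α, h⟩ : {x // HereditarilyLt μ x}) ∈ M} =
      Ordinal.lift.{1,0} (Cardinal.aleph n).ord := by
  have hmuinf : Cardinal.aleph0 ≤ μ := hμreg.aleph0_le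
  set SBig : Set Ordinal.{0} := {α : Ordinal.{0} | α < (Order.succ κ).ord ∧
      ∃ h : HereditarilyLt μ (vN α), (⟨vN α, h⟩ : {x // HereditarilyLt μ x}) ∈ M} with hSBig
  have bound : ∀ γ : Ordinal.{0}, γ ∈ SBig →
      #↥(SBig ∩ Set.Iio γ) < Cardinal.lift.{1,0} (Cardinal.aleph n) := by
    intro γ hγ
    rcases le_or_gt γ κ.ord with hle | hlt2
    · refine lt_of_le_of_lt (Cardinal.mk_le_mk_of_subset ?_) hsmall
      rintro α ⟨⟨h1, h2⟩, h3⟩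
      exact ⟨lt_of_lt_of_le h3 hle, h2⟩
    · have hseg := segment_le hmuinf hμbig M hγ.1 hlt2 hγ.2
      have hEq : SBig ∩ Set.Iio γ = {α : Ordinal.{0} | α < γ ∧
          ∃ h : HereditarilyLt μ (vN α), (⟨vN α, h⟩ : Hty μ) ∈ M} := by
        ext α
        constructor
        · rintro ⟨⟨h1, h2⟩, h3⟩
          exact ⟨h3, h2⟩
        · rintro ⟨h1, h2⟩
          exact ⟨⟨h1.trans hγ.1, h2⟩, h1⟩
      rw [hEq]
      exact lt_of_le_of_lt hseg hsmall
  have hcard : (otp SBig).card = Cardinal.lift.{1,0} (Cardinal.aleph n) := by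
    rw [otp, Ordinal.card_type]
    exact hsize
  have hlow : (Cardinal.lift.{1,0} (Cardinal.aleph n)).ord ≤ otp SBig :=
    Cardinal.ord_le.2 (le_of_eq hcard.symm)
  rw [Cardinal.lift_ord]
  refine le_antisymm ?_ hlow
  by_contra hcon
  push_neg at hcon
  rw [otp] at hcon
  obtain ⟨s, hs⟩ := Ordinal.typein_surj (Subrel (· < ·) (· ∈ SBig)) hcon
  have hc2 : #{ y : ↥SBig // Subrel (· < ·) (· ∈ SBig) y s } =
      Cardinal.lift.{1,0} (Cardinal.aleph n) := by
    rw [← Ordinal.card_typein, hs, Cardinal.card_ord]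
  have e : { y : ↥SBig // Subrel (· < ·) (· ∈ SBig) y s } ≃ ↥(SBig ∩ Set.Iio s.1) :=
    { toFun := fun y => ⟨y.1.1, y.1.2, y.2⟩
      invFun := fun x => ⟨⟨x.1, x.2.1⟩, x.2.2⟩
      left_inv := fun y => rfl
      right_inv := fun x => rfl }
  have := bound s.1 s.2
  rw [← Cardinal.mk_congr e, hc2] at this
  exact lt_irrefl _ this
end
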